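/- arXiv:2204.01785 — 4 statements merged into one kernel-verified Lean document; each statement's English description precedes it below -/
import Mathlib

section
/- Let u ∈ C²([a,b]) with u(a)=u(b)=0, u^n the vector of nodal values u(x_j), and u^h the solution of the singular system J u^h = (1/h)(∫_a^b u)·1 closest to u^n in Euclidean norm (J the n×n all-ones matrix). Then ‖u^h − u^n‖_∞ ≤ C h² for a constant C independent of h. -/
open MeasureTheory intervalIntegral Matrix

lemma ftc_within (a b : ℝ) (f f' : ℝ → ℝ)
    (hf : ContinuousOn f (Set.Icc a b))
    (hd : ∀ x ∈ Set.Icc a b, HasDerivWithinAt f (f' x) (Set.Icc a b) x)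
    (hf' : ContinuousOn f' (Set.Icc a b))
    (p q : ℝ) (hp : a ≤ p) (hpq : p ≤ q) (hq : q ≤ b) :
    ∫ x in p..q, f' x = f q - f p := by
  apply intervalIntegral.integral_eq_sub_of_hasDeriv_right_of_le hpq
    (hf.mono (Set.Icc_subset_Icc hp hq))
    (fun x hx => ?_) ((hf'.mono (Set.Icc_subset_Icc hp hq)).intervalIntegrable_of_Icc hpq)
  have hmem : Set.Icc a b ∈ nhds x :=
    Icc_mem_nhds (lt_of_le_of_lt hp hx.1) (lt_of_lt_of_le hx.2 hq)
  exact ((hd x (mem_of_mem_nhds hmem)).hasDerivAt hmem).hasDerivWithinAt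

lemma trap_est (a b : ℝ) (hab : a < b) (u : ℝ → ℝ) (M : ℝ)
    (hu : ContDiffOn ℝ 2 u (Set.Icc a b))
    (hM : ∀ x ∈ Set.Icc a b, |iteratedDerivWithin 2 u (Set.Icc a b) x| ≤ M)
    (p q : ℝ) (hp : a ≤ p) (hpq : p ≤ q) (hq : q ≤ b) :
    |(∫ x in p..q, u x) - (q - p) * (u p + u q) / 2| ≤ 2 * M * (q - p) ^ 3 := by
  have hs : UniqueDiffOn ℝ (Set.Icc a b) := uniqueDiffOn_Icc hab
  set s := Set.Icc a b with hsdef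
  set u1 := derivWithin u s with hu1def
  set u2 := derivWithin u1 s with hu2def
  have hpmem : p ∈ s := ⟨hp, le_trans hpq hq⟩
  have hqmem : q ∈ s := ⟨le_trans hp hpq, hq⟩
  have hsub : Set.Icc p q ⊆ s := Set.Icc_subset_Icc hp hq
  have hM0 : 0 ≤ M := le_trans (abs_nonneg _) (hM p hpmem)
  have hqp0 : 0 ≤ q - p := by linarith
  have hu1c : ContDiffOn ℝ 1 u1 s := hu.derivWithin hs (by norm_num)
  have hucont : ContinuousOn u s := hu.continuousOn
  have hu1cont : ContinuousOn u1 s := hu1c.continuousOn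
  have hud : ∀ x ∈ s, HasDerivWithinAt u (u1 x) s x :=
    fun x hx => (hu.differentiableOn (by norm_num) x hx).hasDerivWithinAt
  have hu1d : ∀ x ∈ s, HasDerivWithinAt u1 (u2 x) s x :=
    fun x hx => (hu1c.differentiableOn (by norm_num) x hx).hasDerivWithinAt
  have hu2cont : ContinuousOn u2 s := hu1c.continuousOn_derivWithin hs le_rfl
  have hM2 : ∀ x ∈ s, |u2 x| ≤ M := by
    intro x hx
    have h2 : iteratedDerivWithin 2 u s x = u2 x := by
      rw [iteratedDerivWithin_succ', iteratedDerivWithin_one]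
    rw [← h2]; exact hM x hx
  -- first derivative increments
  have key1 : ∀ t ∈ Set.Icc p q, |u1 t - u1 p| ≤ M * (q - p) := by
    intro t ht
    have h1 : ∫ x in p..t, u2 x = u1 t - u1 p :=
      ftc_within a b u1 u2 hu1cont hu1d hu2cont p t hp ht.1 (le_trans ht.2 hq)
    rw [← h1, ← Real.norm_eq_abs]
    calc ‖∫ x in p..t, u2 x‖ ≤ M * |t - p| := by
          apply intervalIntegral.norm_integral_le_of_norm_le_const
          intro x hx
          have hx' : x ∈ Set.Icc p q := by
            rcases hx with ⟨h1', h2'⟩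
            rw [min_eq_left ht.1, max_eq_right ht.1] at *
            exact ⟨le_of_lt h1', le_trans h2' ht.2⟩
          rw [Real.norm_eq_abs]; exact hM2 x (hsub hx')
      _ ≤ M * (q - p) := by
          rw [abs_of_nonneg (by linarith [ht.1] : (0:ℝ) ≤ t - p)]
          exact mul_le_mul_of_nonneg_left (by linarith [ht.2]) hM0
  set F : ℝ → ℝ := fun x => u x - u p - u1 p * (x - p) with hFdef
  have hFeq : ∀ x ∈ Set.Icc p q, F x = ∫ t in p..x, (u1 t - u1 p) := by
    intro x hx
    have h1 : ∫ t in p..x, u1 t = u x - u p :=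
      ftc_within a b u u1 hucont hud hu1cont p x hp hx.1 (le_trans hx.2 hq)
    rw [intervalIntegral.integral_sub
      (((hu1cont.mono (Set.Icc_subset_Icc hp (le_trans hx.2 hq))).intervalIntegrable_of_Icc hx.1))
      (intervalIntegrable_const), h1, intervalIntegral.integral_const]
    simp [hFdef]; ring
  have hFb : ∀ x ∈ Set.Icc p q, |F x| ≤ M * (q - p) * (q - p) := by
    intro x hx
    rw [hFeq x hx, ← Real.norm_eq_abs]
    calc ‖∫ t in p..x, (u1 t - u1 p)‖ ≤ M * (q - p) * |x - p| := by
          apply intervalIntegral.norm_integral_le_of_norm_le_const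
          intro t ht
          have ht' : t ∈ Set.Icc p q := by
            rcases ht with ⟨h1', h2'⟩
            rw [min_eq_left hx.1, max_eq_right hx.1] at *
            exact ⟨le_of_lt h1', le_trans h2' hx.2⟩
          rw [Real.norm_eq_abs]; exact key1 t ht'
      _ ≤ M * (q - p) * (q - p) := by
          rw [abs_of_nonneg (by linarith [hx.1] : (0:ℝ) ≤ x - p)]
          exact mul_le_mul_of_nonneg_left (by linarith [hx.2]) (by positivity)
  have huint : IntervalIntegrable u volume p q :=
    (hucont.mono hsub).intervalIntegrable_of_Icc hpq
  have hclin : Continuous (fun x : ℝ => u p + u1 p * (x - p)) := by fun_prop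
  have hclin2 : Continuous (fun x : ℝ => u1 p * (x - p)) := by fun_prop
  have hcid : Continuous (fun x : ℝ => x) := continuous_id
  have hlin : IntervalIntegrable (fun x => u p + u1 p * (x - p)) volume p q :=
    hclin.intervalIntegrable p q
  have hFint : ∫ x in p..q, F x =
      (∫ x in p..q, u x) - ((q - p) * u p + u1 p * (q - p) ^ 2 / 2) := by
    have hFx : F = fun x => u x - (u p + u1 p * (x - p)) := by
      funext x; simp [hFdef]; ring
    rw [hFx, intervalIntegral.integral_sub huint hlin]
    have : ∫ x in p..q, (u p + u1 p * (x - p)) =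
        (q - p) * u p + u1 p * (q - p) ^ 2 / 2 := by
      rw [intervalIntegral.integral_add intervalIntegrable_const
        (hclin2.intervalIntegrable p q),
        intervalIntegral.integral_const]
      have h2 : ∫ x in p..q, u1 p * (x - p) = u1 p * ∫ x in p..q, (x - p) :=
        intervalIntegral.integral_const_mul _ _
      rw [h2, intervalIntegral.integral_sub (hcid.intervalIntegrable p q)
        intervalIntegrable_const, integral_id, intervalIntegral.integral_const]
      simp only [smul_eq_mul]; ring
    rw [this]
  have hFq : u q = u p + u1 p * (q - p) + F q := by simp [hFdef]
  have key : (∫ x in p..q, u x) - (q - p) * (u p + u q) / 2 =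
      (∫ x in p..q, F x) - (q - p) * F q / 2 := by
    rw [hFint, hFq]; ring
  rw [key]
  have hIF : |∫ x in p..q, F x| ≤ M * (q - p) * (q - p) * (q - p) := by
    rw [← Real.norm_eq_abs]
    calc ‖∫ x in p..q, F x‖ ≤ M * (q - p) * (q - p) * |q - p| :=
        intervalIntegral.norm_integral_le_of_norm_le_const (fun x hx => by
          have hx' : x ∈ Set.Icc p q := by
            rcases hx with ⟨h1', h2'⟩
            rw [min_eq_left hpq, max_eq_right hpq] at *
            exact ⟨le_of_lt h1', h2'⟩
          rw [Real.norm_eq_abs]; exact hFb x hx')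
      _ = M * (q - p) * (q - p) * (q - p) := by rw [abs_of_nonneg hqp0]
  have hFqb : |F q| ≤ M * (q - p) * (q - p) := hFb q ⟨hpq, le_rfl⟩
  calc |(∫ x in p..q, F x) - (q - p) * F q / 2|
      ≤ |∫ x in p..q, F x| + |(q - p) * F q / 2| := abs_sub _ _
    _ ≤ M * (q - p) * (q - p) * (q - p) + (q - p) * (M * (q - p) * (q - p)) / 2 := by
        apply add_le_add hIF
        rw [abs_div, abs_mul, abs_of_nonneg hqp0, abs_two]
        gcongr
    _ ≤ 2 * M * (q - p) ^ 3 := by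
        nlinarith [mul_nonneg hM0 (mul_nonneg hqp0 (mul_nonneg hqp0 hqp0))]

set_option maxHeartbeats 1000000 in


/-- For u ∈ C²([a,b]) with u(a)=u(b)=0, the solution u^h of the singular system
J u^h = (1/h)(∫u)·1 closest to the nodal vector u^n satisfies
‖u^h − u^n‖_∞ ≤ C h² with C independent of h. -/
theorem closest_solution_error_bound (a b : ℝ) (hab : a < b) (u : ℝ → ℝ) (M : ℝ)
    (hu : ContDiffOn ℝ 2 u (Set.Icc a b))
    (hM : ∀ x ∈ Set.Icc a b, |iteratedDerivWithin 2 u (Set.Icc a b) x| ≤ M)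
    (hua : u a = 0) (hub : u b = 0) :
    ∃ C : ℝ, ∀ N : ℕ, 2 ≤ N → ∀ h : ℝ, h = (b - a) / N →
      ∀ J : Matrix (Fin (N - 1)) (Fin (N - 1)) ℝ, (∀ k l, J k l = 1) →
      ∀ un uh : Fin (N - 1) → ℝ,
        (∀ k, un k = u (a + ((k : ℕ) + 1) * h)) →
        (J.mulVec uh = fun _ => (1 / h) * ∫ x in a..b, u x) →
        (∀ v : Fin (N - 1) → ℝ,
          (J.mulVec v = fun _ => (1 / h) * ∫ x in a..b, u x) →
          ∑ k, (uh k - un k) ^ 2 ≤ ∑ k, (v k - un k) ^ 2) →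
        ∀ k, |uh k - un k| ≤ C * h ^ 2 := by
  have trap_est : ∀ p q : ℝ, a ≤ p → p ≤ q → q ≤ b →
      |(∫ x in p..q, u x) - (q - p) * (u p + u q) / 2| ≤ 2 * M * (q - p) ^ 3 :=
    fun p q hp hpq hq => trap_est a b hab u M hu hM p q hp hpq hq
  refine ⟨4 * M, ?_⟩
  intro N hN h hh J hJ un uh hun hJuh hmin k
  have hM0 : 0 ≤ M := le_trans (abs_nonneg _) (hM a ⟨le_rfl, le_of_lt hab⟩)
  have hNreal : (2:ℝ) ≤ (N:ℝ) := by exact_mod_cast hN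
  have hne' : ((N:ℝ) - 1) ≠ 0 := by linarith
  have hNpos : (0:ℝ) < N := by exact_mod_cast Nat.lt_of_lt_of_le (by norm_num) hN
  have hh0 : 0 < h := by rw [hh]; exact div_pos (by linarith) hNpos
  have hNh : (N:ℝ) * h = b - a := by rw [hh]; field_simp
  set x : ℕ → ℝ := fun j => a + j * h with hxdef
  have hxa : x 0 = a := by simp [hxdef]
  have hxb : x N = b := by simp [hxdef]; linarith [hNh]
  have hxmem : ∀ j, j ≤ N → x j ∈ Set.Icc a b := by
    intro j hj
    have hjr : (j:ℝ) ≤ N := by exact_mod_cast hj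
    constructor
    · simp [hxdef]; positivity
    · simp [hxdef]
      nlinarith [hh0.le]
  have hstep : ∀ j : ℕ, x (j+1) - x j = h := by
    intro j; simp [hxdef]; push_cast; ring
  have hucont : ContinuousOn u (Set.Icc a b) := hu.continuousOn
  have hint : ∀ j, j < N → IntervalIntegrable u volume (x j) (x (j+1)) := by
    intro j hj
    apply ContinuousOn.intervalIntegrable_of_Icc (by linarith [hstep j, hh0])
    exact hucont.mono (Set.Icc_subset_Icc (hxmem j (le_of_lt hj)).1
      (hxmem (j+1) hj).2)
  have hsplit : ∫ t in a..b, u t = ∑ j ∈ Finset.range N, ∫ t in (x j)..(x (j+1)), u t := by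
    rw [intervalIntegral.sum_integral_adjacent_intervals hint, hxa, hxb]
  -- the nodal sum
  set S : ℝ := ∑ l, un l with hSdef
  have hNsucc : N - 1 + 1 = N := by omega
  have hS1 : S = ∑ j ∈ Finset.range (N - 1), u (x (j+1)) := by
    rw [hSdef, ← Fin.sum_univ_eq_sum_range (fun j => u (x (j+1))) (N-1)]
    apply Finset.sum_congr rfl
    intro l _
    rw [hun l]
    simp only [hxdef]; push_cast; ring_nf
  have hS2 : ∑ j ∈ Finset.range N, h * (u (x j) + u (x (j+1))) / 2 = h * S := by
    have e1 : ∑ j ∈ Finset.range N, h * (u (x j) + u (x (j+1))) / 2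
        = (h / 2) * ((∑ j ∈ Finset.range N, u (x j)) + ∑ j ∈ Finset.range N, u (x (j+1))) := by
      rw [← Finset.sum_add_distrib, Finset.mul_sum]
      apply Finset.sum_congr rfl; intro j _; ring
    have e2 : ∑ j ∈ Finset.range N, u (x j)
        = (∑ j ∈ Finset.range (N-1), u (x (j+1))) + u (x 0) := by
      rw [← hNsucc, Finset.sum_range_succ']
      norm_num
    have e3 : ∑ j ∈ Finset.range N, u (x (j+1))
        = (∑ j ∈ Finset.range (N-1), u (x (j+1))) + u (x N) := by
      conv_lhs => rw [← hNsucc, Finset.sum_range_succ]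
      rw [hNsucc]
    rw [e1, e2, e3, hxa, hxb, hua, hub, ← hS1]; ring
  have htrap : |(∫ t in a..b, u t) - h * S| ≤ (N:ℝ) * (2 * M * h ^ 3) := by
    rw [← hS2, hsplit, ← Finset.sum_sub_distrib]
    calc |∑ j ∈ Finset.range N, ((∫ t in (x j)..(x (j+1)), u t) - h * (u (x j) + u (x (j+1))) / 2)|
        ≤ ∑ j ∈ Finset.range N, |(∫ t in (x j)..(x (j+1)), u t) - h * (u (x j) + u (x (j+1))) / 2| :=
        Finset.abs_sum_le_sum_abs _ _
      _ ≤ ∑ j ∈ Finset.range N, 2 * M * h ^ 3 := by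
          apply Finset.sum_le_sum
          intro j hj
          rw [Finset.mem_range] at hj
          have := trap_est (x j) (x (j+1)) (hxmem j hj.le).1
            (by linarith [hstep j, hh0.le]) (hxmem (j+1) hj).2
          rw [hstep j] at this
          convert this using 3
      _ = (N:ℝ) * (2 * M * h ^ 3) := by
          rw [Finset.sum_const, Finset.card_range, nsmul_eq_mul]
  -- minimization: uh - un is constant
  have hn1 : 1 ≤ N - 1 := by omega
  have hnR : ((N - 1 : ℕ) : ℝ) = (N:ℝ) - 1 := by
    have : (1:ℕ) ≤ N := by omega
    push_cast [Nat.cast_sub this]; ring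
  have hnpos : (0:ℝ) < ((N - 1 : ℕ) : ℝ) := by rw [hnR]; linarith
  set c : ℝ := (1 / h) * ∫ t in a..b, u t with hcdef
  set d : ℝ := (c - S) / ((N - 1 : ℕ) : ℝ) with hddef
  have hsum_uh : ∑ l, uh l = c := by
    have := congrFun hJuh k
    simp only [mulVec, dotProduct, hJ, one_mul] at this
    exact this
  have hsum_v : Matrix.mulVec J (fun l => un l + d) = fun _ => c := by
    funext l
    simp only [mulVec, dotProduct, hJ, one_mul]
    rw [Finset.sum_add_distrib, Finset.sum_const, Finset.card_univ, Fintype.card_fin,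
      nsmul_eq_mul, ← hSdef, hddef, hnR]
    field_simp; ring
  have hsq : ∑ l, (uh l - un l) ^ 2 ≤ ∑ l, ((un l + d) - un l) ^ 2 := hmin _ hsum_v
  have hsq' : ∑ l, (uh l - un l) ^ 2 ≤ ((N - 1 : ℕ) : ℝ) * d ^ 2 := by
    calc ∑ l, (uh l - un l) ^ 2 ≤ ∑ l : Fin (N-1), ((un l + d) - un l) ^ 2 := hsq
      _ = ((N - 1 : ℕ) : ℝ) * d ^ 2 := by
        simp [Finset.sum_const, Finset.card_univ]
  have hsumw : ∑ l, (uh l - un l) = ((N - 1 : ℕ) : ℝ) * d := by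
    rw [Finset.sum_sub_distrib, hsum_uh, ← hSdef, hddef, hnR]
    field_simp
  have hexp : ∑ l, (uh l - un l - d) ^ 2 ≤ 0 := by
    have e : ∑ l, (uh l - un l - d) ^ 2
        = (∑ l, (uh l - un l) ^ 2) - 2 * d * (∑ l, (uh l - un l))
          + ((N - 1 : ℕ) : ℝ) * d ^ 2 := by
      rw [Finset.mul_sum, ← Finset.sum_sub_distrib]
      have : (((N - 1 : ℕ) : ℝ) * d ^ 2) = ∑ _l : Fin (N-1), d ^ 2 := by
        simp [Finset.sum_const, Finset.card_univ]
      rw [this, ← Finset.sum_add_distrib]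
      apply Finset.sum_congr rfl; intro l _; ring
    rw [e, hsumw]
    nlinarith [hsq']
  have hconst : uh k - un k = d := by
    have hkle : (uh k - un k - d) ^ 2 ≤ 0 := by
      refine le_trans ?_ hexp
      exact Finset.single_le_sum (f := fun l => (uh l - un l - d) ^ 2)
        (fun l _ => sq_nonneg _) (Finset.mem_univ k)
    have : (uh k - un k - d) ^ 2 = 0 := le_antisymm hkle (sq_nonneg _)
    have := pow_eq_zero_iff (n := 2) (by norm_num) |>.mp this
    linarith [this]
  -- final bound
  rw [hconst, hddef]
  have hcS : |c - S| ≤ 2 * M * (N:ℝ) * h ^ 2 := by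
    have : c - S = (1/h) * ((∫ t in a..b, u t) - h * S) := by
      rw [hcdef]; field_simp
    rw [this, abs_mul, abs_of_pos (by positivity : (0:ℝ) < 1/h)]
    calc (1/h) * |(∫ t in a..b, u t) - h * S| ≤ (1/h) * ((N:ℝ) * (2 * M * h ^ 3)) := by
          apply mul_le_mul_of_nonneg_left htrap (by positivity)
      _ = 2 * M * (N:ℝ) * h ^ 2 := by field_simp
  rw [abs_div, abs_of_pos hnpos]
  rw [div_le_iff₀ hnpos]
  calc |c - S| ≤ 2 * M * (N:ℝ) * h ^ 2 := hcS
    _ ≤ 4 * M * h ^ 2 * ((N - 1 : ℕ) : ℝ) := by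
        rw [hnR]
        nlinarith [mul_nonneg (mul_nonneg hM0 (sq_nonneg h))
          (show (0:ℝ) ≤ (N:ℝ) - 2 by linarith)]
end

section
/- In the setting of the perturbed system, if the column index j is held fixed as n → ∞ and u(x) = O((x−a)^q) near a (with u (q times differentiable, leading Taylor term of order q at a)), then ‖u^h − u^n‖_∞ = O(h^{min(q,2)}). -/
open MeasureTheory intervalIntegral Matrix Set

lemma trap_err {a b : ℝ} {u : ℝ → ℝ} {M : ℝ}
    (hu : DifferentiableOn ℝ u (Set.Icc a b))
    (hlip : ∀ x ∈ Set.Icc a b, ∀ y ∈ Set.Icc a b,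
      |derivWithin u (Set.Icc a b) x - derivWithin u (Set.Icc a b) y| ≤ M * |x - y|)
    (hM0 : 0 ≤ M) {c d : ℝ} (hac : a ≤ c) (hcd : c < d) (hdb : d ≤ b) :
    |(∫ x in c..d, u x) - (d - c) * (u c + u d) / 2| ≤ M * (d - c) ^ 3 := by
  set u1 := derivWithin u (Set.Icc a b) with hu1
  have hdc : d - c ≠ 0 := by linarith
  have hdc0 : (0:ℝ) < d - c := by linarith
  set s := (u d - u c) / (d - c) with hs
  have hsub : Set.Icc c d ⊆ Set.Icc a b := Set.Icc_subset_Icc hac hdb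
  have hioo : Set.Ioo c d ⊆ Set.Ioo a b := Set.Ioo_subset_Ioo hac hdb
  set g : ℝ → ℝ := fun x => u x - (u c + (x - c) * s) with hg
  have hgc : g c = 0 := by simp [hg]
  have hgd : g d = 0 := by
    simp only [hg, hs]
    field_simp
    ring
  have hlin : ∀ x : ℝ, HasDerivAt (fun y => u c + (y - c) * s) s x := by
    intro x
    have := (((hasDerivAt_id x).sub_const c).mul_const s).const_add (u c)
    simpa using this
  -- Rolle for g on [c,d]
  have hgcont : ContinuousOn g (Set.Icc c d) := by
    apply ContinuousOn.sub (hu.continuousOn.mono hsub)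
    fun_prop
  have hgderiv : ∀ x ∈ Set.Ioo c d, HasDerivAt g (u1 x - s) x := by
    intro x hx
    have hxab : Set.Icc a b ∈ nhds x := Icc_mem_nhds (hioo hx).1 (hioo hx).2
    have hdu : HasDerivAt u (u1 x) x :=
      ((hu x (hsub (Set.Ioo_subset_Icc_self hx))).hasDerivWithinAt).hasDerivAt hxab
    exact hdu.sub (hlin x)
  obtain ⟨η, hη, hη0⟩ := exists_hasDerivAt_eq_zero hcd hgcont (hgc.trans hgd.symm) hgderiv
  have hηs : u1 η = s := by linarith [hη0]
  have hηcd : η ∈ Set.Icc c d := Set.Ioo_subset_Icc_self hη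
  -- derivative bound for g on [c,d]
  have hbound : ∀ x ∈ Set.Icc c d, ‖u1 x - s‖ ≤ M * (d - c) := by
    intro x hx
    have := hlip x (hsub hx) η (hsub hηcd)
    rw [hηs] at this
    refine le_trans this ?_
    have : |x - η| ≤ d - c := by
      rw [abs_le]; constructor <;> [linarith [hx.1, hηcd.2]; linarith [hx.2, hηcd.1]]
    nlinarith
  have hgderivW : ∀ x ∈ Set.Icc c d, HasDerivWithinAt g (u1 x - s) (Set.Icc c d) x := by
    intro x hx
    exact (((hu x (hsub hx)).hasDerivWithinAt).mono hsub).sub (hlin x).hasDerivWithinAt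
  have hgle : ∀ x ∈ Set.Icc c d, |g x| ≤ M * (d - c) ^ 2 := by
    intro x hx
    have := (convex_Icc c d).norm_image_sub_le_of_norm_hasDerivWithin_le hgderivW hbound
      (⟨le_refl c, le_of_lt hcd⟩ : c ∈ Set.Icc c d) hx
    rw [hgc, sub_zero] at this
    refine le_trans this ?_
    have h1 : ‖x - c‖ ≤ d - c := by
      rw [Real.norm_eq_abs, abs_le]; constructor <;> [linarith [hx.1]; linarith [hx.2]]
    have hM0 : 0 ≤ M * (d - c) := le_trans (norm_nonneg _) (hbound c ⟨le_refl c, le_of_lt hcd⟩)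
    calc M * (d-c) * ‖x - c‖ ≤ M * (d-c) * (d-c) := by nlinarith [norm_nonneg (x - c)]
      _ = M * (d-c)^2 := by ring
  -- integral of g
  have hiu : IntervalIntegrable u volume c d :=
    (hu.continuousOn.mono hsub).intervalIntegrable_of_Icc (le_of_lt hcd)
  have hilin : IntervalIntegrable (fun x => u c + (x - c) * s) volume c d := by
    apply Continuous.intervalIntegrable; fun_prop
  have hgint : (∫ x in c..d, g x) = (∫ x in c..d, u x) - (d - c) * (u c + u d) / 2 := by
    rw [hg]
    rw [intervalIntegral.integral_sub hiu hilin]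
    have h2 : (∫ x in c..d, (u c + (x - c) * s)) = (d - c) * (u c + u d) / 2 := by
      rw [intervalIntegral.integral_add intervalIntegrable_const (by apply Continuous.intervalIntegrable; fun_prop)]
      rw [intervalIntegral.integral_const]
      have h3 : (∫ x in c..d, (x - c) * s) = ((d - c)^2 / 2) * s := by
        rw [intervalIntegral.integral_mul_const]
        have : (∫ x in c..d, (x - c)) = (d - c)^2/2 := by
          rw [intervalIntegral.integral_sub (by apply Continuous.intervalIntegrable; fun_prop) intervalIntegrable_const]
          rw [integral_id, intervalIntegral.integral_const, smul_eq_mul]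
          ring
        rw [this]
      rw [h3, hs]
      field_simp
      ring
    rw [h2]
  have hfinal : |∫ x in c..d, g x| ≤ M * (d - c)^2 * |d - c| := by
    rw [← Real.norm_eq_abs]
    apply intervalIntegral.norm_integral_le_of_norm_le_const
    intro x hx
    rw [Real.norm_eq_abs]
    rw [Set.uIoc_of_le (le_of_lt hcd)] at hx
    exact hgle x (Set.Ioc_subset_Icc_self hx)
  rw [hgint] at hfinal
  calc |(∫ x in c..d, u x) - (d - c) * (u c + u d) / 2| ≤ M * (d-c)^2 * |d - c| := hfinal
    _ = M * (d - c)^3 := by rw [abs_of_pos hdc0]; ring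

lemma comp_trap {a b : ℝ} {u : ℝ → ℝ} {M : ℝ} (hab : a < b)
    (hu : DifferentiableOn ℝ u (Set.Icc a b))
    (hlip : ∀ x ∈ Set.Icc a b, ∀ y ∈ Set.Icc a b,
      |derivWithin u (Set.Icc a b) x - derivWithin u (Set.Icc a b) y| ≤ M * |x - y|)
    (hM0 : 0 ≤ M) (hua : u a = 0) (hub : u b = 0)
    (N : ℕ) (hN : 1 ≤ N) :
    |(∫ x in a..b, u x) - ((b-a)/N) * ∑ k ∈ Finset.range (N-1), u (a + (k+1)*((b-a)/N))|
      ≤ M * (b-a) * ((b-a)/N)^2 := by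
  set h : ℝ := (b-a)/N with hh
  have hN0 : (0:ℝ) < N := by exact_mod_cast hN
  have hpos : 0 < h := div_pos (by linarith) hN0
  set x : ℕ → ℝ := fun k => a + k * h with hx
  have hx0 : x 0 = a := by simp [hx]
  have hxs : ∀ k, x (k+1) - x k = h := by intro k; simp [hx]; push_cast; ring
  have hxN : x N = b := by
    simp only [hx, hh]; field_simp; ring
  have hNh : (N:ℝ) * h = b - a := by rw [hh]; field_simp
  have hxmem : ∀ k, k ≤ N → x k ∈ Set.Icc a b := by
    intro k hk
    constructor
    · simp only [hx]; nlinarith [Nat.cast_nonneg (α := ℝ) k]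
    · have hk' : (k:ℝ) ≤ N := by exact_mod_cast hk
      simp only [hx]
      nlinarith [hk', hNh, hpos]
  have hcont := hu.continuousOn
  have hint : ∀ k, k < N → IntervalIntegrable u volume (x k) (x (k+1)) := by
    intro k hk
    apply ContinuousOn.intervalIntegrable
    apply hcont.mono
    rw [Set.uIcc_of_le (by linarith [hxs k])]
    exact Set.Icc_subset_Icc (hxmem k (le_of_lt hk)).1 (hxmem (k+1) hk).2
  have hsplit : ∑ k ∈ Finset.range N, ∫ t in (x k)..(x (k+1)), u t = ∫ t in a..b, u t := by
    have := intervalIntegral.sum_integral_adjacent_intervals (a := x) (n := N) hint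
    rwa [hx0, hxN] at this
  -- trapezoid sum equals h * S
  set S : ℝ := ∑ k ∈ Finset.range (N-1), u (a + (k+1)*h) with hS
  have hSx : S = ∑ k ∈ Finset.range (N-1), u (x (k+1)) := by
    apply Finset.sum_congr rfl
    intro k _
    congr 1
    simp [hx]
  have htrap : ∑ k ∈ Finset.range N, (h * (u (x k) + u (x (k+1))) / 2) = h * S := by
    have hNsucc : N = (N-1)+1 := (Nat.succ_pred_eq_of_pos (by omega)).symm
    have e1 : ∑ k ∈ Finset.range N, u (x k) = S := by
      rw [hNsucc, Finset.sum_range_succ', hSx, hx0, hua, add_zero]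
    have e2 : ∑ k ∈ Finset.range N, u (x (k+1)) = S := by
      rw [hNsucc, Finset.sum_range_succ, hSx, ← hNsucc, hxN, hub, add_zero]
    have : ∑ k ∈ Finset.range N, (h * (u (x k) + u (x (k+1))) / 2)
        = (h/2) * (∑ k ∈ Finset.range N, u (x k)) + (h/2) * (∑ k ∈ Finset.range N, u (x (k+1))) := by
      rw [Finset.mul_sum, Finset.mul_sum, ← Finset.sum_add_distrib]
      apply Finset.sum_congr rfl
      intro k _; ring
    rw [this, e1, e2]; ring
  have herr : ∀ k ∈ Finset.range N,
      |(∫ t in (x k)..(x (k+1)), u t) - (h * (u (x k) + u (x (k+1))) / 2)| ≤ M * h^3 := by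
    intro k hk
    rw [Finset.mem_range] at hk
    have h1 : x k < x (k+1) := by linarith [hxs k]
    have := trap_err hu hlip hM0 (hxmem k (le_of_lt hk)).1 h1 (hxmem (k+1) hk).2
    rw [hxs k] at this
    exact this
  calc |(∫ t in a..b, u t) - h * S|
      = |∑ k ∈ Finset.range N, ((∫ t in (x k)..(x (k+1)), u t) - (h * (u (x k) + u (x (k+1))) / 2))| := by
        rw [Finset.sum_sub_distrib, hsplit, htrap]
    _ ≤ ∑ k ∈ Finset.range N, |(∫ t in (x k)..(x (k+1)), u t) - (h * (u (x k) + u (x (k+1))) / 2)| :=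
        Finset.abs_sum_le_sum_abs _ _
    _ ≤ ∑ k ∈ Finset.range N, M * h^3 := Finset.sum_le_sum herr
    _ = N * (M * h^3) := by rw [Finset.sum_const, Finset.card_range]; simp
    _ = M * (b-a) * h^2 := by rw [← hNh]; ring

lemma lip_from_C2 {a b : ℝ} (hab : a < b) {u : ℝ → ℝ} {M : ℝ}
    (hu : ContDiffOn ℝ 2 u (Set.Icc a b))
    (hM : ∀ x ∈ Set.Icc a b, |iteratedDerivWithin 2 u (Set.Icc a b) x| ≤ M) :
    ∀ x ∈ Set.Icc a b, ∀ y ∈ Set.Icc a b,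
      |derivWithin u (Set.Icc a b) x - derivWithin u (Set.Icc a b) y| ≤ M * |x - y| := by
  set s := Set.Icc a b with hs
  have hUD : UniqueDiffOn ℝ s := uniqueDiffOn_Icc hab
  set u1 := derivWithin u s with hu1def
  have hu1 : ContDiffOn ℝ 1 u1 s := hu.derivWithin hUD (by norm_num)
  have hd1 : DifferentiableOn ℝ u1 s := hu1.differentiableOn (by norm_num)
  have hkey : ∀ x ∈ s, derivWithin u1 s x = iteratedDerivWithin 2 u s x := by
    intro x hx
    rw [show (2:ℕ) = 1 + 1 from rfl, iteratedDerivWithin_succ]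
    apply derivWithin_congr
    · intro y hy
      exact (congrFun iteratedDerivWithin_one y).symm
    · exact (congrFun iteratedDerivWithin_one x).symm
  have hbd : ∀ x ∈ s, ‖derivWithin u1 s x‖ ≤ M := by
    intro x hx
    rw [Real.norm_eq_abs, hkey x hx]
    exact hM x hx
  intro x hx y hy
  have := (convex_Icc a b).norm_image_sub_le_of_norm_derivWithin_le hd1 hbd hy hx
  simpa [Real.norm_eq_abs] using this

lemma row_formula {n : ℕ} (i j' : Fin n) (δ : ℝ) (J A : Matrix (Fin n) (Fin n) ℝ)
    (hJ : ∀ k l, J k l = 1) (hA : A = J + Matrix.single i j' δ)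
    (x : Fin n → ℝ) (r : Fin n) :
    A.mulVec x r = (∑ l, x l) + (if r = i then δ * x j' else 0) := by
  subst hA
  rw [Matrix.add_mulVec]
  have h1 : (J.mulVec x) r = ∑ l, x l := by
    simp [Matrix.mulVec, dotProduct, hJ]
  have h2 : ((Matrix.single i j' δ).mulVec x) r = if r = i then δ * x j' else 0 := by
    simp only [Matrix.mulVec, dotProduct, Matrix.single, Matrix.of_apply]
    by_cases hri : r = i
    · subst hri
      simp only [if_true]
      rw [Finset.sum_eq_single j']
      · simp
      · intro l _ hl
        simp [Ne.symm hl]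
      · simp
    · simp only [hri, if_false]
      apply Finset.sum_eq_zero
      intro l _
      simp [Ne.symm hri]
  simp [h1, h2]

set_option maxHeartbeats 2000000 in
/-- Perturbed system with fixed column index j: if u(x) = O((x−a)^q) near a,
then ‖u^h − u^n‖_∞ = O(h^{min(q,2)}). -/
theorem perturbed_fixed_index_error_order (a b : ℝ) (hab : a < b)
    (u : ℝ → ℝ) (M K : ℝ) (q : ℕ)
    (hu : ContDiffOn ℝ 2 u (Set.Icc a b))
    (hM : ∀ x ∈ Set.Icc a b, |iteratedDerivWithin 2 u (Set.Icc a b) x| ≤ M)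
    (hua : u a = 0) (hub : u b = 0)
    (hq : ∀ x ∈ Set.Icc a b, |u x| ≤ K * (x - a) ^ q)
    (δ : ℝ) (hδ : δ ≠ 0) (j : ℕ) :
    ∃ C : ℝ, ∀ N : ℕ, j + 2 ≤ N → ∀ hjN : j < N - 1, ∀ h : ℝ, h = (b - a) / N →
      ∀ i : Fin (N - 1),
      ∀ J A : Matrix (Fin (N - 1)) (Fin (N - 1)) ℝ, (∀ k l, J k l = 1) →
        A = J + Matrix.single i ⟨j, hjN⟩ δ →
      ∀ un uh : Fin (N - 1) → ℝ,
        (∀ k, un k = u (a + ((k : ℕ) + 1) * h)) →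
        (A.mulVec uh = fun _ => (1 / h) * ∫ x in a..b, u x) →
        (∀ v : Fin (N - 1) → ℝ,
          (A.mulVec v = fun _ => (1 / h) * ∫ x in a..b, u x) →
          ∑ k, (uh k - un k) ^ 2 ≤ ∑ k, (v k - un k) ^ 2) →
        ∀ k, |uh k - un k| ≤ C * h ^ (min q 2) := by
  have hD : (0:ℝ) < b - a := by linarith
  set D := b - a with hDdef
  set m := min q 2 with hm
  have hmq : m ≤ q := min_le_left _ _
  have hm2 : m ≤ 2 := min_le_right _ _
  have hM0 : 0 ≤ M := le_trans (abs_nonneg _) (hM a ⟨le_refl a, le_of_lt hab⟩)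
  have hK0 : 0 ≤ K := by
    have h1 := hq b ⟨le_of_lt hab, le_refl b⟩
    have h2 : (0:ℝ) < (b - a)^q := pow_pos hD q
    nlinarith [abs_nonneg (u b)]
  have hlip := lip_from_C2 hab hu hM
  have hdiff : DifferentiableOn ℝ u (Set.Icc a b) := hu.differentiableOn (by norm_num)
  set C1 : ℝ := K * ((j:ℝ)+1)^q * D^(q - m) with hC1
  set C2 : ℝ := 3*M*D^(2-m) + 3*K*((j:ℝ)+1)^q * D^(q-m) with hC2
  set C3 : ℝ := (2/|1+δ| + 1) * K * D^q / ((D/2)^m) with hC3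
  have hC1n : 0 ≤ C1 := by positivity
  have hC2n : 0 ≤ C2 := by positivity
  have hC3n : 0 ≤ C3 := by positivity
  refine ⟨C1 + C2 + C3, ?_⟩
  intro N hjN2 hjN h hh i J A hJ hA un uh hun huh hmin
  set j' : Fin (N-1) := ⟨j, hjN⟩ with hj'
  have hN2 : 2 ≤ N := by omega
  have hNpos : (0:ℝ) < N := by exact_mod_cast (by omega : 0 < N)
  have hpos : 0 < h := by rw [hh]; exact div_pos hD hNpos
  have hNh : (N:ℝ) * h = D := by rw [hh]; field_simp
  have hhD : h ≤ D := by
    have h2N : (2:ℝ) ≤ N := by exact_mod_cast hN2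
    nlinarith [mul_le_mul_of_nonneg_right h2N (le_of_lt hpos)]
  set c : ℝ := (1/h) * ∫ x in a..b, u x with hc
  have hrow : ∀ x : Fin (N-1) → ℝ, ∀ r, A.mulVec x r = (∑ l, x l) + (if r = i then δ * x j' else 0) :=
    fun x r => row_formula i j' δ J A hJ hA x r
  have huhr : ∀ r : Fin (N-1), (∑ l, uh l) + (if r = i then δ * uh j' else 0) = c := by
    intro r
    rw [← hrow uh r]
    exact congrFun huh r
  -- power estimates
  have hpow : ∀ p : ℕ, m ≤ p → h^p ≤ D^(p-m) * h^m := by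
    intro p hp
    have : h^p = h^m * h^(p-m) := by rw [← pow_add]; congr 1; omega
    rw [this]
    have h2 : h^(p-m) ≤ D^(p-m) := pow_le_pow_left₀ (le_of_lt hpos) hhD _
    have h3 : (0:ℝ) ≤ h^m := by positivity
    nlinarith
  have hmh : (0:ℝ) < h^m := pow_pos hpos m
  by_cases hN3 : 3 ≤ N
  case neg =>
    -- N = 2, j = 0, Fin 1
    have hNe : N = 2 := by omega
    subst hNe
    have hj0 : j = 0 := by omega
    have hone : ∀ r : Fin (2-1), r = j' := by
      intro r
      apply Fin.ext
      have h1 := r.isLt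
      have h2 : (j' : ℕ) = j := rfl
      omega
    have hsum1 : ∀ x : Fin (2-1) → ℝ, (∑ l, x l) = x j' := by
      intro x
      exact Finset.sum_eq_single j' (fun l _ hl => absurd (hone l) hl)
        (fun hj => absurd (Finset.mem_univ j') hj)
    have hrow1 : (1 + δ) * uh j' = c := by
      have h0 := huhr i
      rw [hsum1 uh, if_pos rfl] at h0
      linarith [h0]
    have hint : |∫ x in a..b, u x| ≤ K * D^q * D := by
      have := intervalIntegral.norm_integral_le_of_norm_le_const (C := K * D^q) (f := u)
        (a := a) (b := b) ?_
      · rw [Real.norm_eq_abs] at this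
        calc |∫ x in a..b, u x| ≤ K*D^q * |b - a| := this
          _ = K * D^q * D := by rw [abs_of_pos hD]
      · intro x hx
        rw [Set.uIoc_of_le (le_of_lt hab)] at hx
        have hxm : x ∈ Set.Icc a b := Set.Ioc_subset_Icc_self hx
        rw [Real.norm_eq_abs]
        calc |u x| ≤ K * (x - a)^q := hq x hxm
          _ ≤ K * D^q := by
            have : (x-a)^q ≤ D^q := pow_le_pow_left₀ (by linarith [hxm.1]) (by linarith [hxm.2]) q
            nlinarith
    have hh2 : h = D / 2 := by rw [hh]; norm_num
    have hcb : |c| ≤ 2 * K * D^q := by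
      rw [hc, abs_mul, abs_of_pos (by positivity : (0:ℝ) < 1/h)]
      rw [hh2]
      calc 1/(D/2) * |∫ x in a..b, u x| ≤ 1/(D/2) * (K * D^q * D) := by
            apply mul_le_mul_of_nonneg_left hint (by positivity)
        _ = 2 * K * D^q := by field_simp
    have hjv : ((j':ℕ):ℝ) = 0 := by
      have : (j':ℕ) = j := rfl
      rw [this, hj0]; norm_num
    have hunb : |un j'| ≤ K * D^q := by
      rw [hun j', hjv]
      have hxe : a + ((0:ℝ)+1)*h = a + h := by ring
      rw [hxe]
      have hmem : a + h ∈ Set.Icc a b := by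
        constructor
        · linarith
        · have : D = b - a := hDdef
          linarith
      calc |u (a + h)| ≤ K * ((a + h) - a)^q := hq _ hmem
        _ ≤ K * D^q := by
          have h0 : (0:ℝ) ≤ (a+h) - a := by linarith
          have h1 : (a+h) - a ≤ D := by linarith
          have := pow_le_pow_left₀ h0 h1 q
          nlinarith
    intro k
    rw [show k = j' from hone k]
    by_cases hδ1 : (1:ℝ) + δ = 0
    · -- c = 0 and un is also a solution
      have hc0 : c = 0 := by rw [← hrow1, hδ1]; ring
      have hvsol : A.mulVec un = fun _ => (1/h) * ∫ x in a..b, u x := by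
        funext r
        rw [hrow un r, hsum1 un, if_pos ((hone r).trans (hone i).symm)]
        show un j' + δ * un j' = c
        rw [hc0]
        have hδm : δ = -1 := by linarith
        rw [hδm]; ring
      have := hmin un hvsol
      have hz : ∑ l, (uh l - un l)^2 ≤ 0 := by simpa using this
      have hz2 : (uh j' - un j')^2 ≤ 0 := by
        have h1 : ∑ l, (uh l - un l)^2 = (uh j' - un j')^2 := by
          rw [hsum1 (fun l => (uh l - un l)^2)]
        linarith [hz, h1.symm.le]
      have : uh j' - un j' = 0 := by nlinarith [sq_nonneg (uh j' - un j')]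
      rw [this]
      simp only [abs_zero]
      positivity
    · have habs : (0:ℝ) < |1+δ| := abs_pos.mpr hδ1
      have huhv : uh j' = c / (1+δ) := by
        rw [eq_div_iff hδ1]
        linarith [hrow1]
      have hbnd : |uh j' - un j'| ≤ C3 * h^m := by
        have h1 : |uh j' - un j'| ≤ |c|/|1+δ| + |un j'| := by
          rw [huhv]
          calc |c/(1+δ) - un j'| ≤ |c/(1+δ)| + |un j'| := abs_sub _ _
            _ = |c|/|1+δ| + |un j'| := by rw [abs_div]
        have h2 : |c|/|1+δ| ≤ 2*K*D^q/|1+δ| := by gcongr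
        have h3 : C3 * h^m = 2*K*D^q/|1+δ| + K * D^q := by
          rw [hC3, hh2]
          have hDm : ((D/2):ℝ)^m ≠ 0 := by positivity
          field_simp
        linarith [h1, h2, hunb]
      calc |uh j' - un j'| ≤ C3 * h^m := hbnd
        _ ≤ (C1 + C2 + C3) * h^m := by nlinarith [hmh]
  case pos =>
    have hn1 : 2 ≤ N - 1 := by omega
    haveI : Nontrivial (Fin (N-1)) := Fin.nontrivial_iff_two_le.mpr hn1
    obtain ⟨r0, hr0⟩ := exists_ne i
    have hsum : (∑ l, uh l) = c := by
      have h1 := huhr r0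
      rw [if_neg hr0] at h1
      linarith
    have hj'0 : uh j' = 0 := by
      have h1 := huhr i
      rw [if_pos rfl] at h1
      have h2 : δ * uh j' = 0 := by linarith [hsum]
      rcases mul_eq_zero.mp h2 with h3|h3
      · exact absurd h3 hδ
      · exact h3
    set d : Fin (N-1) → ℝ := fun l => uh l - un l with hd
    have heq : ∀ k1 l1 : Fin (N-1), k1 ≠ j' → l1 ≠ j' → k1 ≠ l1 → d k1 = d l1 := by
      intro k1 l1 hk1 hl1 hkl
      set w : Fin (N-1) → ℝ := fun l => (if l = k1 then (1:ℝ) else 0) - (if l = l1 then 1 else 0) with hw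
      set s0 : ℝ := d k1 - d l1 with hs0
      set ε : ℝ := -s0/2 with hε
      set v : Fin (N-1) → ℝ := fun l => uh l + ε * w l with hv
      have hwsum : (∑ l, w l) = 0 := by
        simp only [hw]
        rw [Finset.sum_sub_distrib,
          Finset.sum_ite_eq' Finset.univ k1 (fun _ => (1:ℝ)),
          Finset.sum_ite_eq' Finset.univ l1 (fun _ => (1:ℝ))]
        simp
      have hwj' : w j' = 0 := by
        simp only [hw]
        rw [if_neg (fun e => hk1 e.symm), if_neg (fun e => hl1 e.symm)]
        ring
      have hvsol : A.mulVec v = fun _ => (1/h) * ∫ x in a..b, u x := by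
        funext r
        rw [hrow v r]
        have h1 : (∑ l, v l) = ∑ l, uh l := by
          simp only [hv]
          rw [Finset.sum_add_distrib, ← Finset.mul_sum, hwsum]
          ring
        have h2 : v j' = uh j' := by simp only [hv]; rw [hwj']; ring
        rw [h1, h2, ← hrow uh r]
        exact congrFun huh r
      have hle := hmin v hvsol
      have hdw : (∑ l, d l * w l) = s0 := by
        simp only [hw, mul_sub, mul_ite, mul_one, mul_zero]
        rw [Finset.sum_sub_distrib,
          Finset.sum_ite_eq' Finset.univ k1 d,
          Finset.sum_ite_eq' Finset.univ l1 d]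
        simp [hs0]
      have hww : (∑ l, (w l)^2) = 2 := by
        have hptw : ∀ l, (w l)^2 = (if l = k1 then (1:ℝ) else 0) + (if l = l1 then 1 else 0) := by
          intro l
          by_cases e1 : l = k1
          · have e2 : ¬ (l = l1) := by rw [e1]; exact hkl
            simp [hw, e1, e2, hkl]
          · by_cases e2 : l = l1 <;> simp [hw, e1, e2, hkl, Ne.symm hkl]
        rw [Finset.sum_congr rfl (fun l _ => hptw l), Finset.sum_add_distrib,
          Finset.sum_ite_eq' Finset.univ k1 (fun _ => (1:ℝ)),
          Finset.sum_ite_eq' Finset.univ l1 (fun _ => (1:ℝ))]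
        norm_num
      have hexp : (∑ l, (v l - un l)^2)
          = (∑ l, (uh l - un l)^2) + (2*ε)*(∑ l, d l * w l) + ε^2 * (∑ l, (w l)^2) := by
        rw [Finset.mul_sum, Finset.mul_sum, ← Finset.sum_add_distrib, ← Finset.sum_add_distrib]
        apply Finset.sum_congr rfl
        intro l _
        simp only [hv, hd]
        ring
      rw [hexp, hdw, hww] at hle
      have h0 : 0 ≤ 2*ε*s0 + ε^2*2 := by linarith
      have hs00 : s0 = 0 := by
        rw [hε] at h0
        nlinarith [sq_nonneg s0]
      rw [hs0] at hs00
      linarith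
    obtain ⟨l0, hl0⟩ := exists_ne j'
    set t : ℝ := d l0 with ht
    have hdt : ∀ l, l ≠ j' → d l = t := by
      intro l hl
      by_cases e : l = l0
      · rw [e]
      · exact heq l l0 hl hl0 e
    set S : ℝ := ∑ l, un l with hS
    have hsd : (∑ l, d l) = c - S := by
      simp only [hd]
      rw [Finset.sum_sub_distrib, hsum]
    have hsplit2 : (∑ l, d l) = d j' + ∑ l ∈ Finset.univ.erase j', d l :=
      (Finset.add_sum_erase _ d (Finset.mem_univ j')).symm
    have herase : (∑ l ∈ Finset.univ.erase j', d l) = ((N-2 : ℕ) : ℝ) * t := by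
      rw [Finset.sum_congr rfl (fun l hl => hdt l (Finset.ne_of_mem_erase hl))]
      rw [Finset.sum_const, Finset.card_erase_of_mem (Finset.mem_univ j'),
        Finset.card_univ, Fintype.card_fin, nsmul_eq_mul]
      congr 2
    have hdj' : d j' = -un j' := by simp only [hd]; rw [hj'0]; ring
    have hteq : ((N-2:ℕ):ℝ) * t = c - S + un j' := by
      rw [← herase]
      have := hsplit2
      rw [hsd, hdj'] at this
      linarith
    -- quadrature bound
    have hquad := comp_trap hab hdiff hlip hM0 hua hub N (by omega)
    rw [← hh] at hquad
    have hSeq : S = ∑ k ∈ Finset.range (N-1), u (a + ((k:ℝ)+1) * h) := by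
      rw [hS]
      rw [Finset.sum_congr rfl (fun l (_ : l ∈ Finset.univ) => hun l)]
      exact Fin.sum_univ_eq_sum_range (fun k => u (a + ((k:ℝ)+1)*h)) (N-1)
    rw [← hSeq] at hquad
    have hcS : |c - S| ≤ M * D * h := by
      have he : c - S = (1/h) * ((∫ x in a..b, u x) - h * S) := by
        rw [hc]
        field_simp
      rw [he, abs_mul, abs_of_pos (by positivity : (0:ℝ) < 1/h)]
      calc 1/h * |(∫ x in a..b, u x) - h * S| ≤ 1/h * (M * D * h^2) := by
            apply mul_le_mul_of_nonneg_left ?_ (by positivity)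
            convert hquad using 2
        _ = M * D * h := by field_simp
    have hunj : |un j'| ≤ K * ((j:ℝ)+1)^q * h^q := by
      rw [hun j']
      have hje : ((j' : ℕ) : ℝ) = (j:ℝ) := rfl
      rw [hje]
      have hjN' : (j:ℝ) + 1 ≤ N := by
        have : j + 1 ≤ N := by omega
        exact_mod_cast this
      have hmem : a + ((j:ℝ)+1) * h ∈ Set.Icc a b := by
        constructor
        · nlinarith [hpos, Nat.cast_nonneg (α := ℝ) j]
        · have h1 : ((j:ℝ)+1) * h ≤ (N:ℝ) * h := by
            apply mul_le_mul_of_nonneg_right hjN' (le_of_lt hpos)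
          rw [hNh] at h1
          have : D = b - a := hDdef
          linarith
      calc |u (a + ((j:ℝ)+1)*h)| ≤ K * ((a + ((j:ℝ)+1)*h) - a)^q := hq _ hmem
        _ = K * ((j:ℝ)+1)^q * h^q := by
          rw [show (a + ((j:ℝ)+1)*h) - a = ((j:ℝ)+1)*h by ring, mul_pow]
          ring
    have hNc : ((N-2:ℕ):ℝ) = (N:ℝ) - 2 := by
      have : (2:ℕ) ≤ N := hN2
      push_cast [Nat.cast_sub this]
      ring
    have hN23 : (N:ℝ)/3 ≤ ((N-2:ℕ):ℝ) := by
      rw [hNc]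
      have : (3:ℝ) ≤ N := by exact_mod_cast hN3
      linarith
    have hNinv : (0:ℝ) < (N:ℝ) - 2 := by
      have : (3:ℝ) ≤ N := by exact_mod_cast hN3
      linarith
    have htb : |t| ≤ (M * D * h + K * ((j:ℝ)+1)^q * h^q) * (3 * h / D) := by
      have h1 : |t| * ((N:ℝ) - 2) ≤ M * D * h + K * ((j:ℝ)+1)^q * h^q := by
        have h2 : |((N-2:ℕ):ℝ) * t| = |t| * ((N:ℝ)-2) := by
          rw [abs_mul, hNc, abs_of_pos hNinv]; ring
        rw [← h2, hteq]
        calc |c - S + un j'| ≤ |c - S| + |un j'| := abs_add_le _ _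
          _ ≤ M * D * h + K * ((j:ℝ)+1)^q * h^q := add_le_add hcS hunj
      have h3 : (N:ℝ)/3 ≤ (N:ℝ) - 2 := by rw [← hNc]; exact hN23
      have h4 : 1/((N:ℝ)-2) ≤ 3/(N:ℝ) := by
        rw [div_le_div_iff₀ hNinv hNpos]
        linarith
      have h5 : 3/(N:ℝ) = 3 * h / D := by
        rw [← hNh]
        field_simp
      have h6 : 0 ≤ M * D * h + K * ((j:ℝ)+1)^q * h^q := by positivity
      calc |t| = (|t| * ((N:ℝ)-2)) * (1/((N:ℝ)-2)) := by field_simp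
        _ ≤ (M * D * h + K * ((j:ℝ)+1)^q * h^q) * (1/((N:ℝ)-2)) := by
            apply mul_le_mul_of_nonneg_right h1 (by positivity)
        _ ≤ (M * D * h + K * ((j:ℝ)+1)^q * h^q) * (3/(N:ℝ)) := by
            apply mul_le_mul_of_nonneg_left h4 h6
        _ = (M * D * h + K * ((j:ℝ)+1)^q * h^q) * (3 * h / D) := by rw [h5]
    have htfin : |t| ≤ C2 * h^m := by
      have e1 : (M * D * h + K * ((j:ℝ)+1)^q * h^q) * (3*h/D)
          = 3*M*h^2 + 3*K*((j:ℝ)+1)^q * (h^q * h) / D := by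
        field_simp
      have e2 : h^q * h = h^(q+1) := by rw [pow_succ]
      have e3 : h^2 ≤ D^(2-m)*h^m := hpow 2 hm2
      have e4 : h^(q+1) ≤ D^(q-m)*h^m * D := by
        calc h^(q+1) = h^q * h := (pow_succ h q).symm
          _ ≤ (D^(q-m)*h^m) * D := by
              apply mul_le_mul (hpow q hmq) hhD (le_of_lt hpos) (by positivity)
      have e5 : 3*K*((j:ℝ)+1)^q * (h^q*h) / D ≤ 3*K*((j:ℝ)+1)^q * (D^(q-m)*h^m) := by
        rw [div_le_iff₀ hD]
        have hc0 : (0:ℝ) ≤ 3*K*((j:ℝ)+1)^q := by positivity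
        calc 3*K*((j:ℝ)+1)^q * (h^q*h) ≤ 3*K*((j:ℝ)+1)^q * (D^(q-m)*h^m*D) := by
              apply mul_le_mul_of_nonneg_left _ hc0
              rw [e2]; exact e4
          _ = 3*K*((j:ℝ)+1)^q * (D^(q-m)*h^m) * D := by ring
      calc |t| ≤ (M * D * h + K * ((j:ℝ)+1)^q * h^q) * (3*h/D) := htb
        _ = 3*M*h^2 + 3*K*((j:ℝ)+1)^q * (h^q*h) / D := e1
        _ ≤ 3*M*(D^(2-m)*h^m) + 3*K*((j:ℝ)+1)^q * (D^(q-m)*h^m) := by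
            apply add_le_add _ e5
            nlinarith [e3, hM0]
        _ = C2 * h^m := by rw [hC2]; ring
    intro k
    by_cases hkj : k = j'
    · rw [hkj]
      have e : uh j' - un j' = d j' := rfl
      rw [e, hdj', abs_neg]
      calc |un j'| ≤ K * ((j:ℝ)+1)^q * h^q := hunj
        _ ≤ K * ((j:ℝ)+1)^q * (D^(q-m)*h^m) := by
            apply mul_le_mul_of_nonneg_left (hpow q hmq) (by positivity)
        _ = C1 * h^m := by rw [hC1]; ring
        _ ≤ (C1 + C2 + C3) * h^m := by nlinarith [hmh]
    · have e : uh k - un k = d k := rfl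
      rw [e, hdt k hkj]
      calc |t| ≤ C2 * h^m := htfin
        _ ≤ (C1 + C2 + C3) * h^m := by nlinarith [hmh]
end

section
/- In the setting of the perturbed system with the column spatially fixed (j = j(n) chosen so x_{j(n)} → x* ∈ (a,b) with u(x*) ≠ 0), the discretization error ‖u^h − u^n‖_∞ does not converge to 0 as h → 0; in fact it converges to |u(x*)|. -/
open MeasureTheory intervalIntegral Matrix Filter

lemma quad_aux (a b : ℝ) (hab : a < b) (u : ℝ → ℝ) (hc : ContinuousOn u (Set.Icc a b))
    (L : ℝ) (hL0 : 0 ≤ L)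
    (hLip : ∀ x ∈ Set.Icc a b, ∀ y ∈ Set.Icc a b, |u y - u x| ≤ L * |y - x|)
    (n : ℕ) (hn : 0 < n) (h : ℝ) (hh : h = (b - a) / n) :
    |(∫ x in a..b, u x) - ∑ k ∈ Finset.range n, h * u (a + (k + 1) * h)| ≤ L * (b - a) * h := by
  have hnpos : (0:ℝ) < n := by exact_mod_cast hn
  have hhpos : 0 < h := by rw [hh]; exact div_pos (by linarith) hnpos
  have hnh : (n:ℝ) * h = b - a := by rw [hh]; field_simp
  have hnode : ∀ k : ℝ, 0 ≤ k → k ≤ n → a + k * h ∈ Set.Icc a b := by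
    intro k hk0 hk
    constructor
    · nlinarith
    · nlinarith
  have hint : ∀ k : ℕ, k < n → IntervalIntegrable u volume (a + k * h) (a + ((k:ℝ)+1) * h) := by
    intro k hk
    have hk' : ((k:ℝ)+1) ≤ n := by
      have : (k:ℝ) + 1 ≤ n := by exact_mod_cast hk
      exact this
    apply ContinuousOn.intervalIntegrable
    apply hc.mono
    rw [Set.uIcc_of_le (by nlinarith [Nat.cast_nonneg (α := ℝ) k])]
    intro x hx
    exact ⟨le_trans (hnode k (Nat.cast_nonneg k) (by linarith)).1 hx.1,
      le_trans hx.2 (hnode ((k:ℝ)+1) (by positivity) hk').2⟩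
  have hsplit : ∑ k ∈ Finset.range n, ∫ x in (a + k*h)..(a + ((k:ℝ)+1)*h), u x = ∫ x in a..b, u x := by
    have h2 := intervalIntegral.sum_integral_adjacent_intervals (f := u) (μ := volume)
      (a := fun k => a + k * h) (n := n) (by intro k hk; push_cast; exact hint k hk)
    have h3 : ∀ k ∈ Finset.range n, (∫ x in (a + ((k:ℕ):ℝ)*h)..(a + (((k+1:ℕ)):ℝ)*h), u x)
        = ∫ x in (a + (k:ℝ)*h)..(a + ((k:ℝ)+1)*h), u x := by
      intro k _; push_cast; ring_nf
    rw [Finset.sum_congr rfl h3] at h2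
    rw [h2]
    norm_num
    rw [hnh]
    norm_num
  have hper : ∀ k : ℕ, k < n → |(∫ x in (a + k*h)..(a + ((k:ℝ)+1)*h), u x) - h * u (a + ((k:ℝ)+1)*h)| ≤ L * h * h := by
    intro k hk
    have hk' : ((k:ℝ)+1) ≤ n := by exact_mod_cast hk
    set p := a + (k:ℝ) * h with hp
    set q := a + ((k:ℝ)+1) * h with hq
    have hqp : q - p = h := by rw [hp, hq]; ring
    have hqmem : q ∈ Set.Icc a b := hnode _ (by positivity) hk'
    have h1 : (∫ x in p..q, u x) - h * u q = ∫ x in p..q, (u x - u q) := by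
      rw [intervalIntegral.integral_sub (hint k hk) intervalIntegrable_const,
        intervalIntegral.integral_const, smul_eq_mul, hqp]
    have h2 : |∫ x in p..q, (u x - u q)| ≤ (L * h) * |q - p| := by
      rw [← Real.norm_eq_abs]
      apply intervalIntegral.norm_integral_le_of_norm_le_const
      intro x hx
      rw [Set.uIoc_of_le (by nlinarith)] at hx
      have hxmem : x ∈ Set.Icc a b := by
        constructor
        · exact le_trans (hnode k (Nat.cast_nonneg k) (by linarith)).1 hx.1.le
        · exact le_trans hx.2 hqmem.2
      have hL := hLip q hqmem x hxmem
      have habs : |x - q| ≤ h := by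
        rw [abs_sub_comm, abs_of_nonneg (by linarith [hx.2])]
        linarith [hx.1, hqp]
      calc ‖u x - u q‖ = |u x - u q| := rfl
        _ ≤ L * |x - q| := hL
        _ ≤ L * h := by nlinarith
    rw [h1]
    calc |∫ x in p..q, (u x - u q)| ≤ (L * h) * |q - p| := h2
      _ = L * h * h := by rw [hqp, abs_of_pos hhpos]
  calc |(∫ x in a..b, u x) - ∑ k ∈ Finset.range n, h * u (a + (k + 1) * h)|
      = |∑ k ∈ Finset.range n, ((∫ x in (a + k*h)..(a + ((k:ℝ)+1)*h), u x) - h * u (a + ((k:ℝ)+1)*h))| := by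
        rw [Finset.sum_sub_distrib, hsplit]
    _ ≤ ∑ k ∈ Finset.range n, |(∫ x in (a + k*h)..(a + ((k:ℝ)+1)*h), u x) - h * u (a + ((k:ℝ)+1)*h)| :=
        Finset.abs_sum_le_sum_abs _ _
    _ ≤ ∑ k ∈ Finset.range n, (L * h * h) := Finset.sum_le_sum (fun k hk => hper k (Finset.mem_range.mp hk))
    _ = n * (L * h * h) := by rw [Finset.sum_const, Finset.card_range]; ring
    _ = L * (b - a) * h := by rw [← hnh]; ring


lemma mulVec_formula {n : ℕ} (i j : Fin (n + 1)) (δ : ℝ)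
    (A : Matrix (Fin (n+1)) (Fin (n+1)) ℝ)
    (hA : ∀ k l, A k l = 1 + if i = k ∧ j = l then δ else 0)
    (v : Fin (n+1) → ℝ) (k : Fin (n+1)) :
    A.mulVec v k = (∑ l, v l) + (if i = k then δ * v j else 0) := by
  rw [Matrix.mulVec, dotProduct]
  simp only [hA, add_mul, one_mul, Finset.sum_add_distrib]
  congr 1
  by_cases hik : i = k
  · simp [hik]
  · simp [hik]

lemma sol_struct {n : ℕ} (hn : 1 ≤ n) (i j : Fin (n + 1)) (δ c : ℝ) (hδ : δ ≠ 0)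
    (A : Matrix (Fin (n+1)) (Fin (n+1)) ℝ)
    (hA : ∀ k l, A k l = 1 + if i = k ∧ j = l then δ else 0)
    (uh un : Fin (n+1) → ℝ)
    (huh : A.mulVec uh = fun _ => c)
    (hcl : ∀ v, A.mulVec v = (fun _ => c) → ∑ k, (uh k - un k)^2 ≤ ∑ k, (v k - un k)^2) :
    uh j = 0 ∧ (∑ k, uh k = c) ∧
      ∀ k, k ≠ j → uh k - un k = (c - (∑ k, un k) + un j) / n := by
  have hlt : (1:ℕ) < n + 1 := by omega
  have hmv : ∀ v k, A.mulVec v k = (∑ l, v l) + (if i = k then δ * v j else 0) :=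
    mulVec_formula i j δ A hA
  -- find a row different from i
  obtain ⟨k0, hk0⟩ : ∃ k0 : Fin (n+1), i ≠ k0 := by
    by_cases hi : i = ⟨0, by omega⟩
    · exact ⟨⟨1, hlt⟩, by rw [hi]; simp [Fin.ext_iff]⟩
    · exact ⟨⟨0, by omega⟩, hi⟩
  have hsum : ∑ l, uh l = c := by
    have := congrFun huh k0
    rw [hmv] at this
    simpa [hk0] using this
  have hj0 : uh j = 0 := by
    have := congrFun huh i
    rw [hmv] at this
    rw [if_pos rfl, hsum] at this
    have : δ * uh j = 0 := by linarith
    rcases mul_eq_zero.mp this with h' | h'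
    · exact absurd h' hδ
    · exact h'
  -- equal deviations off j
  have heq : ∀ k l : Fin (n+1), k ≠ j → l ≠ j → k ≠ l →
      uh k - un k = uh l - un l := by
    intro k l hkj hlj hkl
    set e := (uh k - un k) - (uh l - un l) with he
    set v : Fin (n+1) → ℝ :=
      fun p => uh p + (if p = k then -(e/2) else 0) + (if p = l then e/2 else 0) with hv
    have hvsum : ∑ p, v p = ∑ p, uh p := by
      rw [hv]
      simp [Finset.sum_add_distrib, Finset.sum_ite_eq']
    have hvj : v j = uh j := by
      simp [hv, (Ne.symm hkj : j ≠ k), (Ne.symm hlj : j ≠ l)]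
    have hveq : A.mulVec v = fun _ => c := by
      funext r
      rw [hmv, hvsum, hvj, ← hmv uh r, huh]
    have hineq := hcl v hveq
    -- split both sums over {k, l}
    have hsub : ({k, l} : Finset (Fin (n+1))) ⊆ Finset.univ := Finset.subset_univ _
    have hsplit : ∀ f : Fin (n+1) → ℝ,
        ∑ p, f p = (∑ p ∈ Finset.univ \ {k, l}, f p) + (f k + f l) := by
      intro f
      rw [← Finset.sum_sdiff hsub, Finset.sum_pair hkl]
    rw [hsplit (fun p => (uh p - un p)^2), hsplit (fun p => (v p - un p)^2)] at hineq
    have hrest : ∑ p ∈ Finset.univ \ {k, l}, (v p - un p)^2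
        = ∑ p ∈ Finset.univ \ {k, l}, (uh p - un p)^2 := by
      apply Finset.sum_congr rfl
      intro p hp
      simp only [Finset.mem_sdiff, Finset.mem_insert, Finset.mem_singleton] at hp
      have hpk : p ≠ k := fun hc => hp.2 (Or.inl hc)
      have hpl : p ≠ l := fun hc => hp.2 (Or.inr hc)
      simp [hv, hpk, hpl]
    rw [hrest] at hineq
    have hvk : v k = uh k - e/2 := by simp [hv, hkl]; ring
    have hvl : v l = uh l + e/2 := by simp [hv, Ne.symm hkl]
    rw [hvk, hvl] at hineq
    have he0 : e = 0 := by nlinarith [sq_nonneg e]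
    have : (uh k - un k) - (uh l - un l) = 0 := by rw [← he]; exact he0
    linarith
  refine ⟨hj0, hsum, ?_⟩
  intro k hkj
  have hall : ∀ l, l ≠ j → uh l - un l = uh k - un k := by
    intro l hlj
    by_cases hlk : l = k
    · rw [hlk]
    · exact heq l k hlj hkj hlk
  have hcard : (Finset.univ \ {j} : Finset (Fin (n+1))).card = n := by
    rw [Finset.card_sdiff_of_subset (Finset.subset_univ _)]
    simp
  have hsum2 : ∑ l ∈ Finset.univ \ {j}, (uh l - un l) = n * (uh k - un k) := by
    rw [Finset.sum_congr rfl (fun l hl => by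
      simp only [Finset.mem_sdiff, Finset.mem_singleton] at hl
      exact hall l hl.2)]
    rw [Finset.sum_const, hcard, nsmul_eq_mul]
  have hsum3 : ∑ l ∈ Finset.univ \ {j}, (uh l - un l)
      = c - (∑ l, un l) + un j := by
    rw [Finset.sum_sdiff_eq_sub (Finset.subset_univ _), Finset.sum_singleton,
      Finset.sum_sub_distrib, hsum, hj0]
    ring
  have hnne : (n:ℝ) ≠ 0 := by positivity
  field_simp
  rw [← hsum3, hsum2]
  ring

/-- Perturbed system with spatially fixed column (x_{j(n)} → x* with
u(x*) ≠ 0): the discretization error ‖u^h − u^n‖_∞ does not converge to 0;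
it converges to |u(x*)|. (Here m+1 interior nodes, N = m+2 subintervals.) -/
theorem perturbed_spatially_fixed_error_limit (a b xs : ℝ) (hab : a < b)
    (hxs : xs ∈ Set.Ioo a b) (u : ℝ → ℝ) (M : ℝ)
    (hu : ContDiffOn ℝ 2 u (Set.Icc a b))
    (hM : ∀ x ∈ Set.Icc a b, |iteratedDerivWithin 2 u (Set.Icc a b) x| ≤ M)
    (hua : u a = 0) (hub : u b = 0) (huxs : u xs ≠ 0)
    (δ : ℝ) (hδ : δ ≠ 0)
    (h : ℕ → ℝ) (hh : ∀ m, h m = (b - a) / (m + 2))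
    (idx jdx : ∀ m : ℕ, Fin (m + 1))
    (hjdx : Tendsto (fun m => a + ((jdx m : ℕ) + 1) * h m) atTop (nhds xs))
    (J A : ∀ m : ℕ, Matrix (Fin (m + 1)) (Fin (m + 1)) ℝ)
    (hJ : ∀ m k l, J m k l = 1)
    (hA : ∀ m, A m = J m + Matrix.single (idx m) (jdx m) δ)
    (un uh : ∀ m : ℕ, Fin (m + 1) → ℝ)
    (hun : ∀ m k, un m k = u (a + ((k : ℕ) + 1) * h m))
    (huh : ∀ m, (A m).mulVec (uh m) = fun _ => (1 / h m) * ∫ x in a..b, u x)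
    (hclosest : ∀ m, ∀ v : Fin (m + 1) → ℝ,
      ((A m).mulVec v = fun _ => (1 / h m) * ∫ x in a..b, u x) →
      ∑ k, (uh m k - un m k) ^ 2 ≤ ∑ k, (v k - un m k) ^ 2) :
    Tendsto (fun m => ⨆ k : Fin (m + 1), |uh m k - un m k|) atTop
      (nhds |u xs|) := by
  -- basic facts
  have hcont : ContinuousOn u (Set.Icc a b) := hu.continuousOn
  have hhpos : ∀ m : ℕ, 0 < h m := by
    intro m; rw [hh]; apply div_pos (by linarith); positivity
  -- Lipschitz bound
  obtain ⟨L0, hL0⟩ : ∃ C, ∀ x ∈ Set.Icc a b, ‖derivWithin u (Set.Icc a b) x‖ ≤ C := by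
    obtain ⟨C, hC⟩ := (isCompact_Icc).exists_bound_of_continuousOn
      (hu.continuousOn_derivWithin (uniqueDiffOn_Icc hab) one_le_two)
    exact ⟨C, hC⟩
  set L := max L0 0 with hLdef
  have hL0' : (0:ℝ) ≤ L := le_max_right _ _
  have hLip : ∀ x ∈ Set.Icc a b, ∀ y ∈ Set.Icc a b, |u y - u x| ≤ L * |y - x| := by
    intro x hx y hy
    have := Convex.norm_image_sub_le_of_norm_derivWithin_le (C := L)
      (hu.differentiableOn two_ne_zero)
      (fun z hz => le_trans (hL0 z hz) (le_max_left _ _)) (convex_Icc a b) hx hy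
    simpa using this
  have hS : ∀ x ∈ Set.Icc a b, |u x| ≤ L * (b - a) := by
    intro x hx
    have := hLip a (Set.left_mem_Icc.mpr hab.le) x hx
    rw [hua, sub_zero] at this
    have habs : |x - a| ≤ b - a := by
      rw [abs_of_nonneg (by linarith [hx.1])]; linarith [hx.2]
    nlinarith
  -- nodes are in Icc
  have hnode : ∀ (m : ℕ) (k : Fin (m+1)), a + ((k:ℕ) + 1) * h m ∈ Set.Icc a b := by
    intro m k
    have hk : ((k:ℕ):ℝ) + 1 ≤ (m:ℝ) + 2 := by
      have := k.is_lt
      have : ((k:ℕ):ℝ) ≤ m := by exact_mod_cast Nat.lt_succ_iff.mp this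
      linarith
    have hmh : ((m:ℝ) + 2) * h m = b - a := by rw [hh]; field_simp
    constructor
    · nlinarith [hhpos m, Nat.cast_nonneg (α := ℝ) (k:ℕ)]
    · nlinarith [hhpos m, Nat.cast_nonneg (α := ℝ) (k:ℕ)]
  -- quadrature estimate
  have hquad : ∀ m : ℕ, |(1 / h m) * (∫ x in a..b, u x) - ∑ k, un m k| ≤ L * (b - a) := by
    intro m
    have hq := quad_aux a b hab u hcont L hL0' hLip (m + 2) (by omega) (h m)
      (by rw [hh]; norm_num)
    have hlast : a + ((m + 1 : ℕ) + 1) * h m = b := by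
      rw [hh]; push_cast; field_simp; ring
    have hsum : ∑ k ∈ Finset.range (m+2), h m * u (a + (k + 1) * h m)
        = h m * ∑ k, un m k := by
      rw [Finset.sum_range_succ]
      rw [show ((m+1:ℕ):ℝ) = (m:ℝ)+1 by push_cast; ring] at hlast ⊢
      rw [hlast, hub, mul_zero, add_zero, Finset.mul_sum]
      rw [← Fin.sum_univ_eq_sum_range (fun k : ℕ => h m * u (a + ((k:ℝ) + 1) * h m)) (m+1)]
      apply Finset.sum_congr rfl
      intro k _
      rw [hun]
    rw [hsum] at hq
    have hne : h m ≠ 0 := (hhpos m).ne'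
    have : |(1 / h m) * ((∫ x in a..b, u x) - h m * ∑ k, un m k)| ≤ (1 / h m) * (L * (b - a) * h m) := by
      rw [abs_mul, abs_of_pos (one_div_pos.mpr (hhpos m))]
      apply mul_le_mul_of_nonneg_left hq (one_div_pos.mpr (hhpos m)).le
    calc |(1 / h m) * (∫ x in a..b, u x) - ∑ k, un m k|
        = |(1 / h m) * ((∫ x in a..b, u x) - h m * ∑ k, un m k)| := by
          congr 1; field_simp
      _ ≤ (1 / h m) * (L * (b - a) * h m) := this
      _ = L * (b - a) := by field_simp
  -- structure of the solution for m ≥ 1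
  have hA' : ∀ m k l, A m k l = 1 + if idx m = k ∧ jdx m = l then δ else 0 := by
    intro m k l
    rw [hA]
    simp [Matrix.add_apply, hJ, Matrix.single]
  have hstruct : ∀ m : ℕ, 1 ≤ m →
      uh m (jdx m) = 0 ∧ (∑ k, uh m k = (1 / h m) * ∫ x in a..b, u x) ∧
      ∀ k, k ≠ jdx m → uh m k - un m k
        = ((1 / h m) * (∫ x in a..b, u x) - (∑ k, un m k) + un m (jdx m)) / m := by
    intro m hm
    exact sol_struct hm (idx m) (jdx m) δ _ hδ (A m) (hA' m) (uh m) (un m)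
      (huh m) (hclosest m)
  -- limit of u at the moving node
  have hunj : Tendsto (fun m => un m (jdx m)) atTop (nhds (u xs)) := by
    have hxsIcc : xs ∈ Set.Icc a b := ⟨hxs.1.le, hxs.2.le⟩
    have hcw : ContinuousWithinAt u (Set.Icc a b) xs := hcont xs hxsIcc
    have htend : Tendsto (fun m => a + ((jdx m : ℕ) + 1) * h m) atTop
        (nhdsWithin xs (Set.Icc a b)) := by
      rw [tendsto_nhdsWithin_iff]
      exact ⟨hjdx, Filter.Eventually.of_forall (fun m => hnode m (jdx m))⟩
    have := hcw.tendsto.comp htend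
    simpa [Function.comp_def, hun] using this
  -- the off-j deviation bound
  set C := 2 * (L * (b - a)) with hC
  have hlam : ∀ m : ℕ, 1 ≤ m → ∀ k, k ≠ jdx m → |uh m k - un m k| ≤ C / m := by
    intro m hm k hk
    rw [(hstruct m hm).2.2 k hk]
    have hm0 : (0:ℝ) < (m:ℝ) := by exact_mod_cast hm
    rw [abs_div, abs_of_pos hm0]
    apply div_le_div_of_nonneg_right ?_ hm0.le
    have h1 := hquad m
    have h2 : |un m (jdx m)| ≤ L * (b - a) := by
      rw [hun]; exact hS _ (hnode m (jdx m))
    calc |(1 / h m) * (∫ x in a..b, u x) - (∑ k, un m k) + un m (jdx m)|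
        ≤ |(1 / h m) * (∫ x in a..b, u x) - (∑ k, un m k)| + |un m (jdx m)| := abs_add_le _ _
      _ ≤ C := by rw [hC]; linarith
  -- squeeze
  have hCm : Tendsto (fun m : ℕ => C / m) atTop (nhds 0) :=
    tendsto_const_div_atTop_nhds_zero_nat C
  have hupper : Tendsto (fun m : ℕ => max |un m (jdx m)| (C / m)) atTop (nhds |u xs|) := by
    have := (hunj.abs).max hCm
    rwa [max_eq_left (abs_nonneg _)] at this
  apply tendsto_of_tendsto_of_tendsto_of_le_of_le' (hunj.abs) hupper
  · filter_upwards [eventually_ge_atTop 1] with m hm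
    have hd : |uh m (jdx m) - un m (jdx m)| = |un m (jdx m)| := by
      rw [(hstruct m hm).1, zero_sub, abs_neg]
    rw [← hd]
    exact le_ciSup (f := fun k => |uh m k - un m k|)
      (Set.Finite.bddAbove (Set.finite_range _)) (jdx m)
  · filter_upwards [eventually_ge_atTop 1] with m hm
    apply ciSup_le
    intro k
    by_cases hk : k = jdx m
    · rw [hk, (hstruct m hm).1, zero_sub, abs_neg]
      exact le_max_left _ _
    · exact le_trans (hlam m hm k hk) (le_max_right _ _)
end

section
/- For the perturbed system, the truncation error (with the paper's normalization) is τ_h(u) = δ u_j^n h e_i + O(h²). Consequently, if j is fixed, u has leading Taylor order q at a, and δ = δ(h) = O(h^r), then ‖τ_h(u)‖_∞ = O(h^{min(q+r+1, 2)}); in particular the perturbation is undetected (τ_h remains O(h²)) whenever q + r ≥ 1. -/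
open MeasureTheory intervalIntegral Matrix


lemma cell_est (a b : ℝ) (hab : a < b) (u : ℝ → ℝ) (M : ℝ)
    (hu : ContDiffOn ℝ 2 u (Set.Icc a b))
    (hM : ∀ x ∈ Set.Icc a b, |iteratedDerivWithin 2 u (Set.Icc a b) x| ≤ M)
    (c d : ℝ) (hac : a ≤ c) (hcd : c ≤ d) (hdb : d ≤ b) :
    |(∫ x in c..d, u x) - (d - c) * (u c + u d) / 2| ≤ 2 * M * (d - c) ^ 3 := by
  have hs : UniqueDiffOn ℝ (Set.Icc a b) := uniqueDiffOn_Icc hab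
  set s := Set.Icc a b with hsdef
  have hM0 : 0 ≤ M := le_trans (abs_nonneg _) (hM a (Set.left_mem_Icc.2 hab.le))
  set f' := derivWithin u s with hf'def
  have hf'cd : ContDiffOn ℝ 1 f' s := hu.derivWithin hs (by norm_num)
  have hf'cont : ContinuousOn f' s := hf'cd.continuousOn
  have hf'diff : DifferentiableOn ℝ f' s := hf'cd.differentiableOn (by norm_num)
  have hd2 : ∀ x ∈ s, derivWithin f' s x = iteratedDerivWithin 2 u s x := by
    intro x hx
    rw [show (2:ℕ) = 1 + 1 from rfl, iteratedDerivWithin_succ',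
      iteratedDerivWithin_one]
  have hlip : ∀ x ∈ s, ∀ y ∈ s, |f' y - f' x| ≤ M * |y - x| := by
    intro x hx y hy
    have := Convex.norm_image_sub_le_of_norm_derivWithin_le hf'diff
      (fun z hz => by rw [Real.norm_eq_abs, hd2 z hz]; exact hM z hz)
      (convex_Icc a b) hx hy
    simpa [Real.norm_eq_abs] using this
  have hsub : Set.Icc c d ⊆ s := Set.Icc_subset_Icc hac hdb
  -- FTC on subintervals
  have key : ∀ x ∈ Set.Icc c d, u x - u c = ∫ t in c..x, f' t := by
    intro x hx
    have hcx : c ≤ x := hx.1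
    have h1 : ContinuousOn u (Set.Icc c x) :=
      hu.continuousOn.mono (Set.Icc_subset_Icc hac (hx.2.trans hdb))
    have h3 : IntervalIntegrable f' volume c x := by
      apply (hf'cont.mono ?_).intervalIntegrable
      rw [Set.uIcc_of_le hcx]; exact Set.Icc_subset_Icc hac (hx.2.trans hdb)
    have h2 : ∀ t ∈ Set.Ioo c x, HasDerivWithinAt u (f' t) (Set.Ioi t) t := by
      intro t ht
      have htab : t ∈ Set.Ioo a b := ⟨lt_of_le_of_lt hac ht.1, lt_of_lt_of_le ht.2 (hx.2.trans hdb)⟩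
      have hnhds : s ∈ nhds t := Icc_mem_nhds htab.1 htab.2
      have : HasDerivAt u (deriv u t) t :=
        ((hu.contDiffAt hnhds).differentiableAt (by norm_num)).hasDerivAt
      rw [hf'def, derivWithin_of_mem_nhds hnhds]
      exact this.hasDerivWithinAt
    rw [integral_eq_sub_of_hasDeriv_right_of_le hcx h1 h2 h3]
  -- remainder bound
  set R : ℝ → ℝ := fun x => u x - u c - f' c * (x - c) with hRdef
  have hcs : c ∈ s := ⟨hac, hcd.trans hdb⟩
  have hR : ∀ x ∈ Set.Icc c d, |R x| ≤ M * (d - c) ^ 2 := by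
    intro x hx
    have hcx : c ≤ x := hx.1
    have hxd : x ≤ d := hx.2
    have h3 : IntervalIntegrable f' volume c x := by
      apply (hf'cont.mono ?_).intervalIntegrable
      rw [Set.uIcc_of_le hcx]; exact Set.Icc_subset_Icc hac (hxd.trans hdb)
    have : R x = ∫ t in c..x, (f' t - f' c) := by
      rw [intervalIntegral.integral_sub h3 intervalIntegrable_const,
        intervalIntegral.integral_const]
      simp only [hRdef]
      rw [← key x hx, smul_eq_mul]; ring
    rw [this]
    have hb1 : ‖∫ t in c..x, (f' t - f' c)‖ ≤ M * (d - c) * |x - c| := by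
      refine intervalIntegral.norm_integral_le_of_norm_le_const ?_
      intro t ht
      rw [Set.uIoc_of_le hcx] at ht
      rw [Real.norm_eq_abs]
      have hts : t ∈ s := ⟨hac.trans ht.1.le, ht.2.trans (hxd.trans hdb)⟩
      refine le_trans (hlip c hcs t hts) ?_
      have : |t - c| ≤ d - c := by
        rw [abs_of_nonneg (by linarith [ht.1.le])]; linarith [ht.2, hxd]
      nlinarith
    rw [Real.norm_eq_abs] at hb1
    refine le_trans hb1 ?_
    have : |x - c| ≤ d - c := by rw [abs_of_nonneg (by linarith)]; linarith
    nlinarith [mul_nonneg hM0 (show (0:ℝ) ≤ d - c by linarith), abs_nonneg (x - c)]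
  -- split integral
  have hInt_u : IntervalIntegrable u volume c d := by
    apply (hu.continuousOn.mono ?_).intervalIntegrable
    rw [Set.uIcc_of_le hcd]; exact hsub
  have hclin : Continuous (fun x : ℝ => u c + f' c * (x - c)) := by fun_prop
  have hc1 : Continuous (fun x : ℝ => f' c * (x - c)) := by fun_prop
  have hc2 : Continuous (fun x : ℝ => x - c) := by fun_prop
  have hInt_lin : IntervalIntegrable (fun x => u c + f' c * (x - c)) volume c d :=
    hclin.intervalIntegrable _ _
  have hInt_R : IntervalIntegrable R volume c d := by
    have : R = fun x => u x - (u c + f' c * (x - c)) := by funext x; simp only [hRdef]; ring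
    rw [this]; exact hInt_u.sub hInt_lin
  have hsplit : (∫ x in c..d, u x) = (∫ x in c..d, (u c + f' c * (x - c))) + ∫ x in c..d, R x := by
    rw [← intervalIntegral.integral_add hInt_lin hInt_R]
    congr 1; funext x; simp only [hRdef]; ring
  have hlin : (∫ x in c..d, (u c + f' c * (x - c))) = (d - c) * u c + f' c * (d - c) ^ 2 / 2 := by
    rw [intervalIntegral.integral_add intervalIntegrable_const (hc1.intervalIntegrable _ _),
      intervalIntegral.integral_const]
    have : (∫ x in c..d, f' c * (x - c)) = f' c * ∫ x in c..d, (x - c) := by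
      rw [← intervalIntegral.integral_const_mul]
    rw [this]
    have h2 : (∫ x in c..d, (x - c)) = (d ^ 2 - c ^ 2) / 2 - (d - c) * c := by
      rw [intervalIntegral.integral_sub
        ((continuous_id'.intervalIntegrable _ _ : IntervalIntegrable (fun x : ℝ => x) volume c d))
        intervalIntegrable_const, integral_id, intervalIntegral.integral_const]
      simp [smul_eq_mul]
    rw [h2]; simp [smul_eq_mul]; ring
  have hud : u d - u c = f' c * (d - c) + R d := by simp only [hRdef]; ring
  have hIR : |∫ x in c..d, R x| ≤ M * (d - c) ^ 2 * (d - c) := by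
    have h1 : ‖∫ x in c..d, R x‖ ≤ M * (d - c) ^ 2 * |d - c| := by
      refine intervalIntegral.norm_integral_le_of_norm_le_const ?_
      intro t ht
      rw [Set.uIoc_of_le hcd] at ht
      rw [Real.norm_eq_abs]
      exact hR t ⟨ht.1.le, ht.2⟩
    rw [Real.norm_eq_abs, abs_of_nonneg (show (0:ℝ) ≤ d - c by linarith)] at h1
    exact h1
  have hRd : |R d| ≤ M * (d - c) ^ 2 := hR d ⟨hcd, le_refl d⟩
  have heq : (∫ x in c..d, u x) - (d - c) * (u c + u d) / 2
      = (∫ x in c..d, R x) - (d - c) * R d / 2 := by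
    rw [hsplit, hlin]
    have : u d = u c + f' c * (d - c) + R d := by linarith [hud]
    rw [this]; ring
  rw [heq]
  calc |(∫ x in c..d, R x) - (d - c) * R d / 2|
      ≤ |∫ x in c..d, R x| + |(d - c) * R d / 2| := abs_sub _ _
    _ ≤ M * (d - c) ^ 2 * (d - c) + (d - c) * (M * (d - c) ^ 2) / 2 := by
        refine add_le_add hIR ?_
        rw [abs_div, abs_mul, abs_of_nonneg (by linarith : (0:ℝ) ≤ d - c),
          show |(2:ℝ)| = 2 by norm_num]
        have h3 := mul_le_mul_of_nonneg_left hRd (show (0:ℝ) ≤ d - c by linarith)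
        linarith
    _ ≤ 2 * M * (d - c) ^ 3 := by
        nlinarith [mul_nonneg hM0 (pow_nonneg (show (0:ℝ) ≤ d - c by linarith) 3)]

lemma sum_est (a b : ℝ) (hab : a < b) (u : ℝ → ℝ) (M : ℝ)
    (hu : ContDiffOn ℝ 2 u (Set.Icc a b))
    (hM : ∀ x ∈ Set.Icc a b, |iteratedDerivWithin 2 u (Set.Icc a b) x| ≤ M)
    (hua : u a = 0) (hub : u b = 0) (N : ℕ) (hN : 1 ≤ N) :
    |((b - a) / N) * (∑ k ∈ Finset.range (N - 1), u (a + ((k : ℝ) + 1) * ((b - a) / N)))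
        - ∫ x in a..b, u x| ≤ 2 * M * (b - a) * ((b - a) / N) ^ 2 := by
  have hN0 : (0:ℝ) < N := by exact_mod_cast Nat.lt_of_lt_of_le Nat.zero_lt_one hN
  set h := (b - a) / N with hdef
  have hh : 0 < h := div_pos (by linarith) hN0
  set x : ℕ → ℝ := fun k => a + k * h with hxdef
  have hx0 : x 0 = a := by simp [hxdef]
  have hxN : x N = b := by
    have hNne : (N:ℝ) ≠ 0 := ne_of_gt hN0
    show a + (N:ℝ) * h = b
    rw [hdef]; field_simp; ring
  have hmono : ∀ k l, k ≤ l → x k ≤ x l := by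
    intro k l hkl
    have hc : (k:ℝ) ≤ l := Nat.cast_le.2 hkl
    show a + (k:ℝ) * h ≤ a + (l:ℝ) * h
    nlinarith [mul_le_mul_of_nonneg_right hc hh.le]
  have hxmem : ∀ k ≤ N, x k ∈ Set.Icc a b := by
    intro k hk
    constructor
    · show a ≤ a + (k:ℝ) * h
      nlinarith [mul_nonneg (Nat.cast_nonneg (α := ℝ) k) hh.le]
    · rw [← hxN]; exact hmono k N hk
  have hstep : ∀ k : ℕ, x (k+1) - x k = h := by
    intro k
    show (a + ((k+1 : ℕ):ℝ) * h) - (a + (k:ℝ) * h) = h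
    push_cast; ring
  have hint : ∀ k < N, IntervalIntegrable u volume (x k) (x (k+1)) := by
    intro k hk
    apply (hu.continuousOn.mono ?_).intervalIntegrable
    rw [Set.uIcc_of_le (hmono k (k+1) (Nat.le_succ k))]
    exact Set.Icc_subset_Icc (hxmem k hk.le).1 (hxmem (k+1) hk).2
  have htotal : ∑ k ∈ Finset.range N, ∫ t in x k..x (k+1), u t = ∫ t in a..b, u t := by
    rw [intervalIntegral.sum_integral_adjacent_intervals hint, hx0, hxN]
  have hcell : ∀ k ∈ Finset.range N,
      |h * (u (x k) + u (x (k+1))) / 2 - ∫ t in x k..x (k+1), u t| ≤ 2 * M * h ^ 3 := by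
    intro k hk
    rw [Finset.mem_range] at hk
    have hc := cell_est a b hab u M hu hM (x k) (x (k+1)) (hxmem k hk.le).1
      (hmono k (k+1) (Nat.le_succ k)) (hxmem (k+1) hk).2
    rw [hstep k] at hc
    rw [abs_sub_comm]
    convert hc using 3 <;> ring
  have hTsum : ∑ k ∈ Finset.range N, h * (u (x k) + u (x (k+1))) / 2
      = h * ∑ k ∈ Finset.range (N - 1), u (x (k+1)) := by
    obtain ⟨m, rfl⟩ : ∃ m, N = m + 1 := ⟨N - 1, (Nat.succ_pred_eq_of_pos hN).symm⟩
    have hsplit : ∀ k : ℕ, h * (u (x k) + u (x (k+1))) / 2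
        = (h/2) * u (x k) + (h/2) * u (x (k+1)) := by intro k; ring
    simp only [hsplit]
    rw [Finset.sum_add_distrib, ← Finset.mul_sum, ← Finset.mul_sum,
      Finset.sum_range_succ' (fun k => u (x k)) m, Finset.sum_range_succ (fun k => u (x (k+1))) m,
      hx0, hua, hxN, hub, Nat.add_sub_cancel]
    ring
  have hfix : ∑ k ∈ Finset.range (N - 1), u (a + ((k : ℝ) + 1) * h)
      = ∑ k ∈ Finset.range (N - 1), u (x (k+1)) := by
    refine Finset.sum_congr rfl fun k _ => ?_
    congr 1
    show a + ((k:ℝ) + 1) * h = a + ((k+1 : ℕ):ℝ) * h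
    push_cast; ring
  rw [hfix, ← hTsum, ← htotal, ← Finset.sum_sub_distrib]
  calc |∑ k ∈ Finset.range N, (h * (u (x k) + u (x (k+1))) / 2 - ∫ t in x k..x (k+1), u t)|
      ≤ ∑ k ∈ Finset.range N, |h * (u (x k) + u (x (k+1))) / 2 - ∫ t in x k..x (k+1), u t| :=
        Finset.abs_sum_le_sum_abs _ _
    _ ≤ ∑ _k ∈ Finset.range N, 2 * M * h ^ 3 := Finset.sum_le_sum hcell
    _ = N * (2 * M * h ^ 3) := by rw [Finset.sum_const, Finset.card_range]; ring
    _ = 2 * M * (b - a) * h ^ 2 := by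
        have : (N:ℝ) * h = b - a := by
          rw [hdef]; field_simp
        rw [← this]; ring


set_option maxHeartbeats 1000000 in
/-- Perturbed truncation error: τ_h(u) = h(J + δE_{i,j})u^n − (∫u)·1 equals
δ u_j^n h e_i + O(h²); with j fixed, u of leading order q at a, and
δ = O(h^r), it satisfies ‖τ_h(u)‖_∞ = O(h^{min(q+r+1,2)}), so the
perturbation is undetected whenever q + r ≥ 1. -/
theorem perturbed_truncation_error_order (a b : ℝ) (hab : a < b)
    (u : ℝ → ℝ) (M K Kd : ℝ) (q r : ℕ)
    (hu : ContDiffOn ℝ 2 u (Set.Icc a b))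
    (hM : ∀ x ∈ Set.Icc a b, |iteratedDerivWithin 2 u (Set.Icc a b) x| ≤ M)
    (hua : u a = 0) (hub : u b = 0)
    (hq : ∀ x ∈ Set.Icc a b, |u x| ≤ K * (x - a) ^ q)
    (j : ℕ) (δ : ℕ → ℝ) :
    ∃ C : ℝ, ∀ N : ℕ, j + 2 ≤ N → ∀ hjN : j < N - 1, ∀ h : ℝ, h = (b - a) / N →
      |δ N| ≤ Kd * h ^ r →
      ∀ i : Fin (N - 1),
      ∀ J A : Matrix (Fin (N - 1)) (Fin (N - 1)) ℝ, (∀ k l, J k l = 1) →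
        A = J + Matrix.single i ⟨j, hjN⟩ (δ N) →
      ∀ un : Fin (N - 1) → ℝ, (∀ k, un k = u (a + ((k : ℕ) + 1) * h)) →
      ∀ k : Fin (N - 1),
        |(h * A.mulVec un k - ∫ x in a..b, u x) -
            (if k = i then δ N * un ⟨j, hjN⟩ * h else 0)| ≤ C * h ^ 2 ∧
        |h * A.mulVec un k - ∫ x in a..b, u x| ≤ C * h ^ (min (q + r + 1) 2) := by
  set B := max 1 (b - a) with hBdef
  set E := Kd * K * ((j:ℝ) + 1) ^ q with hEdef
  set C := (2 * M * (b - a) + E) * B ^ (q + r + 1) with hCdef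
  refine ⟨C, ?_⟩
  intro N hN hjN h hh hδ i J A hJ hA un hun k
  subst hh
  set h := (b - a) / N with hdef
  have hN1 : 1 ≤ N := by omega
  have hN0 : (0:ℝ) < N := by exact_mod_cast Nat.lt_of_lt_of_le Nat.zero_lt_one hN1
  have hh0 : 0 < h := div_pos (by linarith) hN0
  have hM0 : 0 ≤ M := le_trans (abs_nonneg _) (hM a (Set.left_mem_Icc.2 hab.le))
  have hK0 : 0 ≤ K := by
    have h1 := hq b (Set.right_mem_Icc.2 hab.le)
    nlinarith [pow_pos (show (0:ℝ) < b - a by linarith) q, abs_nonneg (u b)]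
  have hKd0 : 0 ≤ Kd := by
    nlinarith [abs_nonneg (δ N), pow_pos hh0 r, hδ]
  have hE0 : 0 ≤ E := by
    have : (0:ℝ) ≤ ((j:ℝ) + 1) ^ q := by positivity
    rw [hEdef]; positivity
  have hB1 : (1:ℝ) ≤ B := le_max_left _ _
  have hBh : h ≤ B := le_trans (div_le_self (by linarith) (by exact_mod_cast hN1)) (le_max_right _ _)
  have hBp : (1:ℝ) ≤ B ^ (q + r + 1) := one_le_pow₀ hB1
  -- the unperturbed sum
  set S := ∑ l : Fin (N - 1), un l with hSdef
  have hSconv : S = ∑ n ∈ Finset.range (N - 1), u (a + ((n : ℝ) + 1) * h) := by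
    rw [hSdef]
    rw [show (∑ l : Fin (N - 1), un l)
        = ∑ l : Fin (N - 1), u (a + (((l : ℕ) : ℝ) + 1) * h) from
      Finset.sum_congr rfl fun l _ => hun l]
    exact Fin.sum_univ_eq_sum_range (fun n => u (a + ((n : ℝ) + 1) * h)) (N - 1)
  have hS : |h * S - ∫ x in a..b, u x| ≤ 2 * M * (b - a) * h ^ 2 := by
    rw [hSconv]
    exact sum_est a b hab u M hu hM hua hub N hN1
  -- mulVec computation
  have hmv : A.mulVec un k = S + (if k = i then δ N * un ⟨j, hjN⟩ else 0) := by
    rw [hA, Matrix.add_mulVec, Pi.add_apply]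
    have h1 : J.mulVec un k = S := by
      simp [Matrix.mulVec, dotProduct, hJ, hSdef]
    have h2 : (Matrix.single i ⟨j, hjN⟩ (δ N)).mulVec un k
        = if k = i then δ N * un ⟨j, hjN⟩ else 0 := by
      by_cases hk : k = i
      · subst hk
        simp [Matrix.mulVec, dotProduct, Matrix.single, ite_and,
          Finset.sum_ite_eq]
      · have hik : i ≠ k := fun hc => hk hc.symm
        simp [Matrix.mulVec, dotProduct, Matrix.single, ite_and, hk, hik]
    rw [h1, h2]
  -- perturbation bound
  have hjb : a + ((j:ℝ) + 1) * h ∈ Set.Icc a b := by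
    constructor
    · nlinarith [mul_nonneg (show (0:ℝ) ≤ (j:ℝ) + 1 by positivity) hh0.le]
    · have hj1 : ((j:ℝ) + 1) ≤ N := by
        have : (j + 1 : ℕ) ≤ N := by omega
        exact_mod_cast this
      have : ((j:ℝ) + 1) * h ≤ (N:ℝ) * h := by nlinarith
      have hNh : (N:ℝ) * h = b - a := by rw [hdef]; field_simp
      linarith
  have hunj : |un ⟨j, hjN⟩| ≤ K * (((j:ℝ) + 1) * h) ^ q := by
    rw [hun ⟨j, hjN⟩]
    have := hq _ hjb
    simpa using this
  have hP : |δ N * un ⟨j, hjN⟩ * h| ≤ E * h ^ (q + r + 1) := by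
    calc |δ N * un ⟨j, hjN⟩ * h| = |δ N| * |un ⟨j, hjN⟩| * h := by
          rw [abs_mul, abs_mul, abs_of_pos hh0]
      _ ≤ (Kd * h ^ r) * (K * (((j:ℝ) + 1) * h) ^ q) * h := by
          have h1 : 0 ≤ Kd * h ^ r := by positivity
          have h2 : 0 ≤ K * (((j:ℝ) + 1) * h) ^ q := by positivity
          have h3 := mul_le_mul hδ hunj (abs_nonneg _) h1
          exact mul_le_mul_of_nonneg_right h3 hh0.le
      _ = E * h ^ (q + r + 1) := by rw [hEdef, mul_pow]; ring
  -- power comparisons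
  set m := min (q + r + 1) 2 with hmdef
  have hm1 : 1 ≤ m := by omega
  have hpow : ∀ e : ℕ, m ≤ e → e - m ≤ q + r + 1 → h ^ e ≤ B ^ (q + r + 1) * h ^ m := by
    intro e he hle
    have h1 : h ^ e = h ^ m * h ^ (e - m) := by rw [← pow_add]; congr 1; omega
    rw [h1]
    calc h ^ m * h ^ (e - m) ≤ h ^ m * B ^ (e - m) := by gcongr
      _ ≤ h ^ m * B ^ (q + r + 1) := by
          gcongr
      _ = B ^ (q + r + 1) * h ^ m := by ring
  have hpow2 : h ^ 2 ≤ B ^ (q + r + 1) * h ^ m := hpow 2 (min_le_right _ _) (by omega)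
  have hpowq : h ^ (q + r + 1) ≤ B ^ (q + r + 1) * h ^ m := hpow (q + r + 1) (min_le_left _ _) (by omega)
  constructor
  · have key1 : h * A.mulVec un k - (∫ x in a..b, u x) -
        (if k = i then δ N * un ⟨j, hjN⟩ * h else 0) = h * S - ∫ x in a..b, u x := by
      rw [hmv]
      by_cases hk : k = i <;> simp [hk] <;> ring
    rw [key1]
    have hC1 : 2 * M * (b - a) ≤ C := by
      rw [hCdef]
      nlinarith [hBp, hE0, hM0, mul_nonneg (mul_nonneg (by norm_num : (0:ℝ) ≤ 2) hM0) (show (0:ℝ) ≤ b - a by linarith)]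
    refine le_trans hS ?_
    exact mul_le_mul_of_nonneg_right hC1 (pow_nonneg hh0.le 2)
  · have key2 : h * A.mulVec un k - ∫ x in a..b, u x
        = (h * S - ∫ x in a..b, u x) + (if k = i then δ N * un ⟨j, hjN⟩ * h else 0) := by
      rw [hmv]
      by_cases hk : k = i <;> simp [hk] <;> ring
    rw [key2]
    have hite : |if k = i then δ N * un ⟨j, hjN⟩ * h else 0| ≤ E * h ^ (q + r + 1) := by
      by_cases hk : k = i
      · simpa [hk] using hP
      · simp [hk]
        positivity
    calc |(h * S - ∫ x in a..b, u x) + (if k = i then δ N * un ⟨j, hjN⟩ * h else 0)|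
        ≤ |h * S - ∫ x in a..b, u x| + |if k = i then δ N * un ⟨j, hjN⟩ * h else 0| := abs_add_le _ _
      _ ≤ 2 * M * (b - a) * h ^ 2 + E * h ^ (q + r + 1) := add_le_add hS hite
      _ ≤ 2 * M * (b - a) * (B ^ (q + r + 1) * h ^ m) + E * (B ^ (q + r + 1) * h ^ m) := by
          refine add_le_add ?_ ?_
          · exact mul_le_mul_of_nonneg_left hpow2 (by nlinarith)
          · exact mul_le_mul_of_nonneg_left hpowq hE0
      _ = C * h ^ m := by rw [hCdef]; ring
end
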